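/- arXiv:1102.3615 — 4 statements merged into one kernel-verified Lean document; each statement's English description precedes it below -/
import Mathlib

section
/- Let G be a finite directed graph with real edge weights in which every vertex has a successor, q₀ a vertex, and x ∈ ℚ. Then sup over infinite paths ρ from q₀ of payoff(ρ) ≥ x if and only if there exists an even priority p and a strongly connected subgraph C of the subgraph induced by vertices of priority ≥ p, reachable from q₀, containing a vertex of priority p, and containing a cycle of average weight ≥ x. -/
open Filter

/-- A (weighted) game graph with priorities: states are partitioned between
Player 1 (`isP1`) and Player 2, `E` is the edge relation, `w` the edge weights
and `col` the priority function. -/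
structure Game (V : Type) where
  isP1 : V → Prop
  E : V → V → Prop
  w : V → V → ℝ
  col : V → ℕ

variable {V : Type}

/-- An infinite play (infinite path in the graph). -/
def IsPlay (G : Game V) (ρ : ℕ → V) : Prop := ∀ n, G.E (ρ n) (ρ (n + 1))

/-- The set of states occurring infinitely often. -/
def InfOcc (ρ : ℕ → V) : Set V := {v | ∃ᶠ n in atTop, ρ n = v}

/-- The average weight of the first `n` edges of `ρ`. -/
noncomputable def avgW (G : Game V) (ρ : ℕ → V) (n : ℕ) : ℝ :=
  (∑ i ∈ Finset.range n, G.w (ρ i) (ρ (i + 1))) / n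

/-- A play is parity-winning if the minimal priority seen infinitely often is even. -/
def ParityWin (G : Game V) (ρ : ℕ → V) : Prop := Even (sInf (G.col '' InfOcc ρ))

/-- The payoff of a play: the liminf of the average weights if the play is
parity-winning, and `-∞` otherwise. -/
noncomputable def payoff (G : Game V) (ρ : ℕ → V) : EReal :=
  haveI := Classical.dec (ParityWin G ρ)
  if ParityWin G ρ then Filter.liminf (fun n => ((avgW G ρ n : ℝ) : EReal)) atTop else ⊥

/-- A strategy of Player 1: given the past history and the current state
(controlled by Player 1), choose a successor. -/
structure Strat1 (G : Game V) where
  f : List V → V → V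
  valid : ∀ h c, G.isP1 c → G.E c (f h c)

/-- A strategy of Player 2. -/
structure Strat2 (G : Game V) where
  f : List V → V → V
  valid : ∀ h c, ¬ G.isP1 c → G.E c (f h c)

def Memoryless1 {G : Game V} (σ : Strat1 G) : Prop := ∀ h h' c, σ.f h c = σ.f h' c
def Memoryless2 {G : Game V} (τ : Strat2 G) : Prop := ∀ h h' c, τ.f h c = τ.f h' c

/-- A play is consistent with a strategy of Player 1. -/
def Consistent1 (G : Game V) (σ : Strat1 G) (ρ : ℕ → V) : Prop :=
  ∀ n, G.isP1 (ρ n) → ρ (n + 1) = σ.f (List.ofFn fun i : Fin n => ρ i) (ρ n)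

/-- A play is consistent with a strategy of Player 2. -/
def Consistent2 (G : Game V) (τ : Strat2 G) (ρ : ℕ → V) : Prop :=
  ∀ n, ¬ G.isP1 (ρ n) → ρ (n + 1) = τ.f (List.ofFn fun i : Fin n => ρ i) (ρ n)

/-- The value of a Player 1 strategy from `q₀`: the infimum of the payoffs of
consistent plays from `q₀`. -/
noncomputable def val1 (G : Game V) (σ : Strat1 G) (q₀ : V) : EReal :=
  ⨅ ρ : {ρ : ℕ → V // IsPlay G ρ ∧ ρ 0 = q₀ ∧ Consistent1 G σ ρ}, payoff G ρ.val

/-- The value of a Player 2 strategy from `q₀`. -/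
noncomputable def val2 (G : Game V) (τ : Strat2 G) (q₀ : V) : EReal :=
  ⨆ ρ : {ρ : ℕ → V // IsPlay G ρ ∧ ρ 0 = q₀ ∧ Consistent2 G τ ρ}, payoff G ρ.val

/-- The lower value of a state. -/
noncomputable def lowVal (G : Game V) (q₀ : V) : EReal := ⨆ σ : Strat1 G, val1 G σ q₀

/-- The upper value of a state. -/
noncomputable def upVal (G : Game V) (q₀ : V) : EReal := ⨅ τ : Strat2 G, val2 G τ q₀

/-- The Player 1 attractor of a set `S`: the states from which Player 1 can
force a visit to `S`. -/
inductive Attr1 (G : Game V) (S : Set V) : V → Prop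
  | base {v} : v ∈ S → Attr1 G S v
  | p1 {v u} : G.isP1 v → G.E v u → Attr1 G S u → Attr1 G S v
  | p2 {v} : ¬ G.isP1 v → (∃ u, G.E v u) → (∀ u, G.E v u → Attr1 G S u) → Attr1 G S v

/-- The Player 2 attractor of a set `S`. -/
inductive Attr2 (G : Game V) (S : Set V) : V → Prop
  | base {v} : v ∈ S → Attr2 G S v
  | p2 {v u} : ¬ G.isP1 v → G.E v u → Attr2 G S u → Attr2 G S v
  | p1 {v} : G.isP1 v → (∃ u, G.E v u) → (∀ u, G.E v u → Attr2 G S u) → Attr2 G S v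

/-- The game restricted to a subarena `T`. -/
def Game.restrict (G : Game V) (T : Set V) : Game T where
  isP1 v := G.isP1 v.val
  E a b := G.E a.val b.val
  w a b := G.w a.val b.val
  col v := G.col v.val

section Aux
open Finset Topology

variable {V : Type}

lemma exists_walk {r : V → V → Prop} {a b : V} (h : Relation.ReflTransGen r a b) :
    ∃ (ℓ : ℕ) (f : ℕ → V), f 0 = a ∧ f ℓ = b ∧ ∀ i < ℓ, r (f i) (f (i+1)) := by
  induction h with
  | refl => exact ⟨0, fun _ => a, rfl, rfl, by omega⟩
  | @tail b c hab hbc ih =>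
    obtain ⟨ℓ, f, h0, hl, hstep⟩ := ih
    refine ⟨ℓ+1, fun i => if i ≤ ℓ then f i else c, by simp [h0], by simp, ?_⟩
    intro i hi
    rcases lt_or_eq_of_le (Nat.lt_succ_iff.mp hi) with hi' | hi'
    · simp only []
      rw [if_pos (le_of_lt hi'), if_pos (Nat.succ_le_of_lt hi')]
      exact hstep i hi'
    · subst hi'; simp only []; rw [if_pos le_rfl, if_neg (by omega), hl]; exact hbc

/-- iterated periodicity -/
lemma periodic_iter {α : Type*} {g : ℕ → α} {T : ℕ} (h : ∀ m, g (m + T) = g m) :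
    ∀ q m, g (m + q * T) = g m := by
  intro q
  induction q with
  | zero => simp
  | succ q ih => intro m; rw [Nat.succ_mul, ← Nat.add_assoc, h, ih]

lemma sum_periodic_blocks (g : ℕ → ℝ) (T : ℕ) (h : ∀ m, g (m + T) = g m) (q : ℕ) :
    ∑ i ∈ range (q * T), g i = q * ∑ i ∈ range T, g i := by
  induction q with
  | zero => simp
  | succ q ih =>
    rw [Nat.succ_mul, ← Finset.sum_range_add_sum_Ico _ (Nat.le_add_right _ _), ih,
      Finset.sum_Ico_eq_sum_range]
    have : ∀ k, g (q * T + k) = g k := fun k => by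
      rw [Nat.add_comm]; exact periodic_iter h q k
    simp only [Nat.add_sub_cancel_left, this]
    push_cast; ring

open Topology in
lemma cesaro (a : ℕ → ℝ) (K T : ℕ) (hT : 0 < T) (hper : ∀ m, K ≤ m → a (m + T) = a m) :
    Tendsto (fun n => (∑ i ∈ Finset.range n, a i) / n) atTop
      (𝓝 ((∑ i ∈ Finset.range T, a (K + i)) / T)) := by
  set b : ℕ → ℝ := fun i => a (K + i) with hb
  have hbper : ∀ m, b (m + T) = b m := by
    intro m; simp only [hb]; rw [← Nat.add_assoc]; exact hper (K + m) (Nat.le_add_right _ _)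
  set P : ℝ := ∑ i ∈ Finset.range T, b i with hP
  set SK : ℝ := ∑ i ∈ Finset.range K, a i with hSK
  set Q : ℝ := ∑ i ∈ Finset.range T, |b i| with hQ
  set L : ℝ := P / T with hL
  have hsum_b : ∀ m : ℕ, ∑ i ∈ Finset.range m, b i = (m / T : ℕ) * P + ∑ i ∈ Finset.range (m % T), b i := by
    intro m
    have hm : m = m / T * T + m % T := (Nat.div_add_mod' m T).symm
    conv_lhs => rw [hm]
    rw [← Finset.sum_range_add_sum_Ico _ (Nat.le_add_right _ _),
      sum_periodic_blocks b T hbper, Finset.sum_Ico_eq_sum_range, Nat.add_sub_cancel_left]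
    congr 1
    apply Finset.sum_congr rfl
    intro i _
    rw [Nat.add_comm]; exact periodic_iter hbper _ i
  have hdec : ∀ n : ℕ, K ≤ n → ∑ i ∈ Finset.range n, a i
      = SK + ((n - K) / T : ℕ) * P + ∑ i ∈ Finset.range ((n - K) % T), b i := by
    intro n hn
    rw [← Finset.sum_range_add_sum_Ico _ hn, Finset.sum_Ico_eq_sum_range, ← hSK]
    have : ∀ k, a (K + k) = b k := fun k => rfl
    simp only [this, hsum_b (n - K)]
    ring
  set Cc : ℝ := |SK| + Q + |P| / T * (K + T) with hCc
  have hTpos : (0:ℝ) < T := by exact_mod_cast hT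
  have key : ∀ n : ℕ, K ≤ n → 0 < n → |(∑ i ∈ Finset.range n, a i) / n - L| ≤ Cc / n := by
    intro n hn hnpos
    have hnposR : (0:ℝ) < n := by exact_mod_cast hnpos
    set q : ℕ := (n - K) / T with hq
    set r : ℕ := (n - K) % T with hr
    have hrT : r < T := Nat.mod_lt _ hT
    have hqr : q * T + r = n - K := by rw [hq, hr, Nat.mul_comm]; exact Nat.div_add_mod _ _
    have hnR : (n:ℝ) = q * T + r + K := by
      have h1 : (q * T + r) + K = n := by omega
      exact_mod_cast congrArg (fun t : ℕ => (t : ℝ)) h1.symm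
    set R : ℝ := ∑ i ∈ Finset.range r, b i with hR
    have hRle : |R| ≤ Q := by
      calc |R| ≤ ∑ i ∈ Finset.range r, |b i| := Finset.abs_sum_le_sum_abs _ _
        _ ≤ Q := Finset.sum_le_sum_of_subset_of_nonneg
            (Finset.range_subset_range.mpr (le_of_lt hrT)) (fun i _ _ => abs_nonneg _)
    have hSn : ∑ i ∈ Finset.range n, a i = SK + q * P + R := by
      rw [hdec n hn]
    have hdiff : ∑ i ∈ Finset.range n, a i - L * n = SK + R - P / T * (K + r) := by
      rw [hSn, hL, hnR]; field_simp; ring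
    have habs : |∑ i ∈ Finset.range n, a i - L * n| ≤ Cc := by
      rw [hdiff, hCc]
      have h1 : |P / T * ((K:ℝ) + r)| = |P| / T * (K + r) := by
        rw [abs_mul, abs_div, abs_of_pos hTpos, abs_of_nonneg (by positivity : (0:ℝ) ≤ (K:ℝ) + r)]
      have h2 : (r:ℝ) ≤ T := by exact_mod_cast le_of_lt hrT
      have h3 : |P| / T * ((K:ℝ) + r) ≤ |P| / T * (K + T) := by
        apply mul_le_mul_of_nonneg_left (by linarith) (by positivity)
      calc |SK + R - P / T * ((K:ℝ) + r)| ≤ |SK + R| + |P / T * ((K:ℝ) + r)| := abs_sub _ _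
        _ ≤ (|SK| + |R|) + |P / T * ((K:ℝ) + r)| := by
            have := abs_add_le SK R; linarith
        _ ≤ |SK| + Q + |P| / T * (K + T) := by rw [h1]; linarith
    have heq : (∑ i ∈ Finset.range n, a i) / n - L = (∑ i ∈ Finset.range n, a i - L * n) / n := by
      field_simp
    rw [heq, abs_div, abs_of_pos hnposR]
    gcongr
  show Tendsto _ _ (𝓝 L)
  rw [← tendsto_sub_nhds_zero_iff]
  apply squeeze_zero_norm' (a := fun n : ℕ => Cc / n)
  · filter_upwards [eventually_ge_atTop (max K 1)] with n hn
    exact key n (le_of_max_le_left hn) (le_of_max_le_right hn)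
  · exact tendsto_const_div_atTop_nhds_zero_nat Cc


variable {V : Type}

section Split
variable {E : V → V → Prop} {w : V → V → ℝ} {C : Set V}

/-- Splitting a closed walk at a repeated vertex. -/
lemma split_walk (w : V → V → ℝ) (E : V → V → Prop) (C : Set V) (c : ℕ → V) (n i j : ℕ)
    (hij : i < j) (hjn : j ≤ n) (heq : c i = c j)
    (hE : ∀ t < n, E (c t) (c (t+1))) (hC : ∀ t ≤ n, c t ∈ C) :
    (∀ t < n - (j - i), E ((fun m => if m < i then c m else c (m + (j - i))) t)
        ((fun m => if m < i then c m else c (m + (j - i))) (t+1))) ∧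
    (∀ t ≤ n - (j - i), (fun m => if m < i then c m else c (m + (j - i))) t ∈ C) ∧
    (fun m => if m < i then c m else c (m + (j - i))) (n - (j - i)) = c n ∧
    (fun m => if m < i then c m else c (m + (j - i))) 0 = c 0 ∧
    ∑ t ∈ range (n - (j - i)), w ((fun m => if m < i then c m else c (m + (j - i))) t)
        ((fun m => if m < i then c m else c (m + (j - i))) (t+1))
      = ∑ t ∈ range n, w (c t) (c (t+1)) - ∑ t ∈ range (j - i), w (c (i+t)) (c (i+t+1)) := by
  set L := j - i with hLdef
  have hLpos : 0 < L := by omega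
  have hLn : L ≤ n := by omega
  have hiL : i + L = j := by omega
  set e := fun m => if m < i then c m else c (m + L) with he
  -- pointwise identification of e-summands
  have hsummand : ∀ t < n - L, w (e t) (e (t+1)) = if t < i then w (c t) (c (t+1)) else w (c (t+L)) (c (t+L+1)) := by
    intro t ht
    by_cases hti : t < i
    · rw [if_pos hti]
      rcases Nat.lt_or_ge (t+1) i with h1 | h1
      · simp only [he, if_pos hti, if_pos h1]
      · have h2 : t + 1 = i := by omega
        simp only [he, if_pos hti, if_neg (by omega : ¬ t + 1 < i)]
        rw [h2, hiL, ← heq, ← h2]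
    · rw [if_neg hti]
      simp only [he, if_neg hti, if_neg (by omega : ¬ t + 1 < i)]
      rw [show t + 1 + L = t + L + 1 by omega]
  have hedge : ∀ t < n - L, E (e t) (e (t+1)) := by
    intro t ht
    by_cases hti : t < i
    · rcases Nat.lt_or_ge (t+1) i with h1 | h1
      · simp only [he, if_pos hti, if_pos h1]
        exact hE t (by omega)
      · have h2 : t + 1 = i := by omega
        simp only [he, if_pos hti, if_neg (by omega : ¬ t + 1 < i)]
        have : c (t + 1 + L) = c (t+1) := by rw [h2, hiL, ← heq]
        rw [this]
        exact hE t (by omega)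
    · simp only [he, if_neg hti, if_neg (by omega : ¬ t + 1 < i)]
      have : t + 1 + L = (t + L) + 1 := by omega
      rw [this]
      exact hE (t + L) (by omega)
  refine ⟨hedge, ?_, ?_, ?_, ?_⟩
  · intro t ht
    by_cases hti : t < i
    · simp only [he, if_pos hti]; exact hC t (by omega)
    · simp only [he, if_neg hti]; exact hC (t + L) (by omega)
  · have : ¬ (n - L < i) := by omega
    simp only [he, if_neg this]
    congr 1
    omega
  · by_cases h0 : 0 < i
    · simp [he, h0]
    · have hi0 : i = 0 := by omega
      simp only [he, if_neg (by omega : ¬ (0:ℕ) < i)]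
      rw [Nat.zero_add, hLdef, hi0, Nat.sub_zero, ← heq, hi0]
  · rw [Finset.sum_congr rfl (fun t ht => hsummand t (Finset.mem_range.mp ht))]
    rw [Finset.sum_ite]
    have hfil1 : Finset.filter (fun t => t < i) (range (n - L)) = range i := by
      ext t; simp [Finset.mem_filter, Finset.mem_range]; omega
    have hfil2 : Finset.filter (fun t => ¬ t < i) (range (n - L)) = Finset.Ico i (n - L) := by
      ext t; simp [Finset.mem_filter, Finset.mem_range, Finset.mem_Ico]; omega
    rw [hfil1, hfil2]
    have h2 : ∑ t ∈ Finset.Ico i (n - L), w (c (t+L)) (c (t+L+1))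
        = ∑ t ∈ Finset.Ico (i+L) n, w (c t) (c (t+1)) := by
      rw [Finset.sum_Ico_eq_sum_range, Finset.sum_Ico_eq_sum_range]
      have hn : n - L - i = n - (i + L) := by omega
      rw [hn]
      apply Finset.sum_congr rfl
      intro t _
      rw [show i + t + L = i + L + t by omega]
    rw [h2]
    have h3 : ∑ t ∈ range L, w (c (i+t)) (c (i+t+1)) = ∑ t ∈ Finset.Ico i (i+L), w (c t) (c (t+1)) := by
      rw [Finset.sum_Ico_eq_sum_range, Nat.add_sub_cancel_left]
    rw [h3]
    have h4 : ∑ t ∈ range n, w (c t) (c (t+1))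
        = ∑ t ∈ range i, w (c t) (c (t+1)) + ∑ t ∈ Finset.Ico i (i+L), w (c t) (c (t+1))
          + ∑ t ∈ Finset.Ico (i+L) n, w (c t) (c (t+1)) := by
      rw [← Finset.sum_range_add_sum_Ico _ (by omega : i ≤ n)]
      rw [← Finset.sum_Ico_consecutive _ (by omega : i ≤ i + L) (by omega : i + L ≤ n)]
      ring
    rw [h4]
    ring
end Split

section Cyc
variable (w : V → V → ℝ) (E : V → V → Prop) (C : Set V)

/-- Making a genuine periodic cycle out of a closed walk segment. -/
lemma cyclify (d : ℕ → V) (L : ℕ) (hL : 0 < L) (hclose : d L = d 0)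
    (hE : ∀ t < L, E (d t) (d (t+1))) (hC : ∀ t ≤ L, d t ∈ C) :
    ∃ c : ℕ → V, (∀ i, E (c i) (c (i+1))) ∧ (∀ i, c (i + L) = c i) ∧ (∀ i, c i ∈ C) ∧
      ∑ t ∈ range L, w (c t) (c (t+1)) = ∑ t ∈ range L, w (d t) (d (t+1)) := by
  have hmod : ∀ i : ℕ, (i+1) % L = (i % L + 1) % L := by
    intro i
    conv_lhs => rw [← Nat.div_add_mod i L]
    rw [Nat.add_assoc, Nat.mul_add_mod]
  refine ⟨fun i => d (i % L), ?_, ?_, ?_, ?_⟩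
  · intro i
    show E (d (i % L)) (d ((i+1) % L))
    have hiL : i % L < L := Nat.mod_lt _ hL
    rcases Nat.lt_or_ge (i % L + 1) L with h | h
    · rw [hmod i, Nat.mod_eq_of_lt h]
      exact hE _ hiL
    · have h2 : i % L + 1 = L := by omega
      rw [hmod i, h2, Nat.mod_self, ← hclose]
      have := hE _ hiL
      rw [h2] at this
      exact this
  · intro i; simp [Nat.add_mod_right]
  · intro i; exact hC _ (le_of_lt (Nat.mod_lt _ hL))
  · apply Finset.sum_congr rfl
    intro t ht
    show w (d (t % L)) (d ((t+1) % L)) = w (d t) (d (t+1))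
    have htL : t < L := Finset.mem_range.mp ht
    have h1 : t % L = t := Nat.mod_eq_of_lt htL
    rcases Nat.lt_or_ge (t+1) L with h | h
    · rw [h1, Nat.mod_eq_of_lt h]
    · have h2 : t + 1 = L := by omega
      rw [h1, h2, Nat.mod_self, hclose]
end Cyc

section Bounds
variable [Fintype V] (w : V → V → ℝ) (E : V → V → Prop) (C : Set V) (M : ℝ)

/-- Pigeonhole: in any walk, among the first `card V + 1` vertices two are equal. -/
lemma exists_repeat (c : ℕ → V) :
    ∃ i j : ℕ, i < j ∧ j ≤ Fintype.card V ∧ c i = c j := by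
  obtain ⟨i, j, hne, hfeq⟩ := Fintype.exists_ne_map_eq_of_card_lt
    (fun i : Fin (Fintype.card V + 1) => c i) (by simp)
  rcases Nat.lt_or_ge i.val j.val with h | h
  · exact ⟨i, j, h, Nat.lt_succ_iff.mp j.isLt, hfeq⟩
  · have h' : j.val < i.val := by
      rcases Nat.lt_or_ge j.val i.val with h2 | h2
      · exact h2
      · exact absurd (Fin.ext (le_antisymm h2 h)) hne
    exact ⟨j, i, h', Nat.lt_succ_iff.mp i.isLt, hfeq.symm⟩

/-- Every closed walk inside `C` has average weight at most `M`,
provided every short periodic cycle in `C` does. -/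
lemma cycle_sum_le
    (HM : ∀ (L : ℕ) (d : ℕ → V), 0 < L → L ≤ Fintype.card V →
      (∀ i, E (d i) (d (i+1))) → (∀ i, d (i + L) = d i) → (∀ i, d i ∈ C) →
      ∑ t ∈ range L, w (d t) (d (t+1)) ≤ M * L) :
    ∀ (n : ℕ) (c : ℕ → V), (∀ t < n, E (c t) (c (t+1))) → (∀ t ≤ n, c t ∈ C) →
      c n = c 0 → ∑ t ∈ range n, w (c t) (c (t+1)) ≤ M * n := by
  intro n
  induction n using Nat.strong_induction_on with
  | _ n ih =>
  intro c hE hC hclose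
  rcases Nat.eq_zero_or_pos n with h0 | hpos
  · subst h0; simp
  by_cases hnk : n ≤ Fintype.card V
  · obtain ⟨c', h1, h2, h3, h4⟩ := cyclify w E C c n hpos hclose hE hC
    rw [← h4]
    exact HM n c' hpos hnk h1 h2 h3
  · push_neg at hnk
    obtain ⟨i, j, hij, hjk, heq⟩ := exists_repeat c
    have hjn : j ≤ n := le_of_lt (lt_of_le_of_lt hjk hnk)
    set L := j - i with hL
    have hLpos : 0 < L := by omega
    have hLk : L ≤ Fintype.card V := by omega
    obtain ⟨eedge, emem, eclose, ezero, esum⟩ := split_walk w E C c n i j hij hjn heq hE hC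
    -- inner cycle bound
    have hinner : ∑ t ∈ range L, w (c (i+t)) (c (i+t+1)) ≤ M * L := by
      have hdE : ∀ t < L, E (c (i+t)) (c (i+t+1)) := fun t ht => by
        have := hE (i+t) (by omega)
        rwa [show i + t + 1 = i + (t+1) by omega] at this ⊢
      have hdC : ∀ t ≤ L, c (i+t) ∈ C := fun t ht => hC (i+t) (by omega)
      have hdclose : c (i + L) = c (i + 0) := by
        rw [show i + L = j by omega, Nat.add_zero, heq]
      obtain ⟨c', h1, h2, h3, h4⟩ := cyclify w E C (fun t => c (i+t)) L hLpos hdclose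
        (fun t ht => by simpa [show i + (t+1) = i + t + 1 by omega] using hdE t ht)
        (fun t ht => hdC t ht)
      have h4' : ∑ t ∈ range L, w (c' t) (c' (t+1))
          = ∑ t ∈ range L, w (c (i+t)) (c (i+t+1)) := by
        rw [h4]
        exact Finset.sum_congr rfl fun t _ => by rw [show i + (t+1) = i + t + 1 by omega]
      rw [← h4']
      exact HM L c' hLpos hLk h1 h2 h3
    -- outer bound by induction
    have houter := ih (n - L) (by omega) _ eedge emem (eclose.trans (hclose.trans ezero.symm))
    have hcast : ((n - L : ℕ) : ℝ) = (n : ℝ) - (L : ℝ) := by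
      have : L ≤ n := by omega
      push_cast [this]; ring
    have : ∑ t ∈ range n, w (c t) (c (t+1))
        = (∑ t ∈ range (n - L), w ((fun m => if m < i then c m else c (m + L)) t)
            ((fun m => if m < i then c m else c (m + L)) (t+1)))
          + ∑ t ∈ range L, w (c (i+t)) (c (i+t+1)) := by
      rw [esum]; ring
    rw [this]
    calc _ ≤ M * ((n - L : ℕ) : ℝ) + M * L := add_le_add houter hinner
      _ = M * n := by rw [hcast]; ring
end Bounds

section Bounds2
variable [Fintype V] (w : V → V → ℝ) (E : V → V → Prop) (C : Set V) (M W : ℝ)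

/-- Any walk inside `C` has total weight at most `M * n + B`. -/
lemma walk_sum_le
    (HM : ∀ (L : ℕ) (d : ℕ → V), 0 < L → L ≤ Fintype.card V →
      (∀ i, E (d i) (d (i+1))) → (∀ i, d (i + L) = d i) → (∀ i, d i ∈ C) →
      ∑ t ∈ range L, w (d t) (d (t+1)) ≤ M * L)
    (hW : ∀ u v, |w u v| ≤ W) (hW0 : 0 ≤ W) :
    ∀ (n : ℕ) (c : ℕ → V), (∀ t < n, E (c t) (c (t+1))) → (∀ t ≤ n, c t ∈ C) →
      ∑ t ∈ range n, w (c t) (c (t+1)) ≤ M * n + (Fintype.card V) * (W + |M|) := by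
  intro n
  induction n using Nat.strong_induction_on with
  | _ n ih =>
  intro c hE hC
  set k := Fintype.card V with hk
  by_cases hnk : n ≤ k
  · have h1 : ∑ t ∈ range n, w (c t) (c (t+1)) ≤ (n : ℝ) * W := by
      calc ∑ t ∈ range n, w (c t) (c (t+1)) ≤ ∑ t ∈ range n, W :=
            Finset.sum_le_sum fun t _ => le_trans (le_abs_self _) (hW _ _)
        _ = (n : ℝ) * W := by rw [Finset.sum_const, Finset.card_range, nsmul_eq_mul]
    have hnkR : (n : ℝ) ≤ (k : ℝ) := by exact_mod_cast hnk
    have p1 : (n:ℝ) * W ≤ (k:ℝ) * W := mul_le_mul_of_nonneg_right hnkR hW0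
    have p2 : -|M| * (n:ℝ) ≤ M * n := mul_le_mul_of_nonneg_right (neg_abs_le M) (Nat.cast_nonneg n)
    have p3 : |M| * (n:ℝ) ≤ |M| * k := mul_le_mul_of_nonneg_left hnkR (abs_nonneg M)
    linarith
  · push_neg at hnk
    obtain ⟨i, j, hij, hjk, heq⟩ := exists_repeat c
    have hjn : j ≤ n := le_of_lt (lt_of_le_of_lt hjk hnk)
    set L := j - i with hL
    have hLpos : 0 < L := by omega
    have hLk : L ≤ k := by omega
    obtain ⟨eedge, emem, eclose, ezero, esum⟩ := split_walk w E C c n i j hij hjn heq hE hC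
    have hinner : ∑ t ∈ range L, w (c (i+t)) (c (i+t+1)) ≤ M * L := by
      have hdE : ∀ t < L, E (c (i+t)) (c (i+t+1)) := fun t ht => by
        have := hE (i+t) (by omega)
        rwa [show i + t + 1 = i + (t+1) by omega] at this ⊢
      have hdC : ∀ t ≤ L, c (i+t) ∈ C := fun t ht => hC (i+t) (by omega)
      have hdclose : c (i + L) = c (i + 0) := by
        rw [show i + L = j by omega, Nat.add_zero, heq]
      obtain ⟨c', h1, h2, h3, h4⟩ := cyclify w E C (fun t => c (i+t)) L hLpos hdclose
        (fun t ht => by simpa [show i + (t+1) = i + t + 1 by omega] using hdE t ht)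
        (fun t ht => hdC t ht)
      have h4' : ∑ t ∈ range L, w (c' t) (c' (t+1))
          = ∑ t ∈ range L, w (c (i+t)) (c (i+t+1)) := by
        rw [h4]
        exact Finset.sum_congr rfl fun t _ => by rw [show i + (t+1) = i + t + 1 by omega]
      rw [← h4']
      exact HM L c' hLpos hLk h1 h2 h3
    have houter := ih (n - L) (by omega) _ eedge emem
    have hcast : ((n - L : ℕ) : ℝ) = (n : ℝ) - (L : ℝ) := by
      have : L ≤ n := by omega
      push_cast [this]; ring
    have hsplit : ∑ t ∈ range n, w (c t) (c (t+1))
        = (∑ t ∈ range (n - L), w ((fun m => if m < i then c m else c (m + L)) t)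
            ((fun m => if m < i then c m else c (m + L)) (t+1)))
          + ∑ t ∈ range L, w (c (i+t)) (c (i+t+1)) := by
      rw [esum]; ring
    rw [hsplit]
    calc _ ≤ (M * ((n - L : ℕ) : ℝ) + (k:ℝ) * (W + |M|)) + M * L := add_le_add houter hinner
      _ = M * n + (k:ℝ) * (W + |M|) := by rw [hcast]; ring
end Bounds2


section PlayLemmas
variable {G : Game V} {ρ : ℕ → V}

lemma infOcc_nonempty [Fintype V] (ρ : ℕ → V) : (InfOcc ρ).Nonempty := by
  by_contra h
  push_neg at h
  have h' : ∀ v, ∀ᶠ n in atTop, ρ n ≠ v := by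
    intro v
    have hv : v ∉ InfOcc ρ := by
      intro hv
      rw [h] at hv
      exact hv
    exact Filter.not_frequently.mp hv
  have : ∀ᶠ n in atTop, ∀ v, ρ n ≠ v := Filter.eventually_all.mpr h'
  obtain ⟨n, hn⟩ := this.exists
  exact hn (ρ n) rfl

lemma eventually_mem_infOcc [Fintype V] (ρ : ℕ → V) : ∀ᶠ n in atTop, ρ n ∈ InfOcc ρ := by
  have h' : ∀ v : V, ∀ᶠ n in atTop, ρ n = v → v ∈ InfOcc ρ := by
    intro v
    by_cases hv : v ∈ InfOcc ρ
    · exact Filter.Eventually.of_forall fun n _ => hv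
    · filter_upwards [Filter.not_frequently.mp hv] with n hn
      exact fun he => absurd he hn
  filter_upwards [Filter.eventually_all.mpr h'] with n hn
  exact hn (ρ n) rfl

lemma reach_play (hplay : IsPlay G ρ) : ∀ n, Relation.ReflTransGen G.E (ρ 0) (ρ n) := by
  intro n
  induction n with
  | zero => exact Relation.ReflTransGen.refl
  | succ n ih => exact ih.tail (hplay n)

lemma infOcc_connected [Fintype V] (hplay : IsPlay G ρ) {u v : V}
    (hu : u ∈ InfOcc ρ) (hv : v ∈ InfOcc ρ) :
    Relation.ReflTransGen (fun a b => G.E a b ∧ a ∈ InfOcc ρ ∧ b ∈ InfOcc ρ) u v := by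
  obtain ⟨N, hN⟩ := Filter.eventually_atTop.mp (eventually_mem_infOcc ρ)
  obtain ⟨m, hmN, hm⟩ := (Filter.frequently_atTop.mp hu) N
  obtain ⟨m', hm'm, hm'⟩ := (Filter.frequently_atTop.mp hv) m
  have key : ∀ d, m + d ≤ m' →
      Relation.ReflTransGen (fun a b => G.E a b ∧ a ∈ InfOcc ρ ∧ b ∈ InfOcc ρ) u (ρ (m + d)) := by
    intro d
    induction d with
    | zero => intro _; rw [Nat.add_zero, hm]
    | succ d ih =>
      intro hd
      refine (ih (by omega)).tail ?_
      refine ⟨hplay (m + d), hN _ (by omega), hN _ (by omega)⟩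
  have := key (m' - m) (by omega)
  rwa [show m + (m' - m) = m' by omega, hm'] at this
end PlayLemmas

end Aux


section Backward
open Finset Topology

lemma succ_mod (T : ℕ) (i : ℕ) : (i+1) % T = (i % T + 1) % T := by
  conv_lhs => rw [← Nat.div_add_mod i T]
  rw [Nat.add_assoc, Nat.mul_add_mod]

lemma walk_mem_of_restricted {E : V → V → Prop} {C : Set V} {f : ℕ → V} {ℓ : ℕ}
    (hE : ∀ i < ℓ, E (f i) (f (i+1)) ∧ f i ∈ C ∧ f (i+1) ∈ C) (h0 : f 0 ∈ C) :
    ∀ i ≤ ℓ, f i ∈ C := by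
  intro i
  induction i with
  | zero => intro _; exact h0
  | succ i ih => intro hi; exact (hE i (by omega)).2.2

lemma backward_dir [Fintype V] (G : Game V) (q₀ : V) (x : ℝ)
    (hRHS : ∃ p : ℕ, Even p ∧ ∃ C : Set V,
        (∀ v ∈ C, p ≤ G.col v) ∧
        (∃ v ∈ C, Relation.ReflTransGen G.E q₀ v) ∧
        (∀ u ∈ C, ∀ v ∈ C,
          Relation.ReflTransGen (fun a b => G.E a b ∧ a ∈ C ∧ b ∈ C) u v) ∧
        (∃ v ∈ C, G.col v = p) ∧
        (∃ n, 0 < n ∧ ∃ c : ℕ → V, (∀ i, c i ∈ C) ∧ (∀ i, G.E (c i) (c (i + 1))) ∧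
          (∀ i, c (i + n) = c i) ∧
          x ≤ (∑ i ∈ Finset.range n, G.w (c i) (c (i + 1))) / n)) :
    ((x : ℝ) : EReal) ≤ (⨆ ρ : {ρ : ℕ → V // IsPlay G ρ ∧ ρ 0 = q₀}, payoff G ρ.val) := by
  classical
  obtain ⟨p, hp, C, hcol, ⟨v, hvC, hreach⟩, hconn, ⟨w0, hw0C, hw0p⟩,
    n, hn, c, hcC, hcE, hcper, hcavg⟩ := hRHS
  obtain ⟨ℓ₀, f₀, hf₀0, hf₀l, hf₀E⟩ := exists_walk hreach
  obtain ⟨ℓ₁, f₁, hf₁0, hf₁l, hf₁E⟩ := exists_walk (hconn v hvC (c 0) (hcC 0))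
  obtain ⟨ℓ₂, f₂, hf₂0, hf₂l, hf₂E⟩ := exists_walk (hconn (c 0) (hcC 0) w0 hw0C)
  obtain ⟨ℓ₃, f₃, hf₃0, hf₃l, hf₃E⟩ := exists_walk (hconn w0 hw0C (c 0) (hcC 0))
  have hf₁C : ∀ i ≤ ℓ₁, f₁ i ∈ C := walk_mem_of_restricted hf₁E (hf₁0 ▸ hvC)
  have hf₂C : ∀ i ≤ ℓ₂, f₂ i ∈ C := walk_mem_of_restricted hf₂E (hf₂0 ▸ hcC 0)
  have hf₃C : ∀ i ≤ ℓ₃, f₃ i ∈ C := walk_mem_of_restricted hf₃E (hf₃0 ▸ hw0C)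
  set Sc : ℝ := ∑ i ∈ Finset.range n, G.w (c i) (c (i + 1)) with hSc
  set S₂ : ℝ := ∑ i ∈ Finset.range ℓ₂, G.w (f₂ i) (f₂ (i + 1)) with hS₂v
  set S₃ : ℝ := ∑ i ∈ Finset.range ℓ₃, G.w (f₃ i) (f₃ (i + 1)) with hS₃v
  set K : ℕ := ℓ₀ + ℓ₁ with hK
  -- the N-indexed plays
  have key : ∀ N : ℕ, (((((N:ℝ)+1) * Sc + (S₂ + S₃)) / (((N:ℝ)+1) * (n:ℝ) + ((ℓ₂:ℝ) + (ℓ₃:ℝ))) : ℝ) : EReal)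
      ≤ (⨆ ρ : {ρ : ℕ → V // IsPlay G ρ ∧ ρ 0 = q₀}, payoff G ρ.val) := by
    intro N
    set b : ℕ := n*(N+1) with hb
    have hbpos : 0 < b := by
      have : n ≤ n * (N+1) := Nat.le_mul_of_pos_right n (by omega)
      omega
    set T : ℕ := b + ℓ₂ + ℓ₃ with hT
    have hTpos : 0 < T := by omega
    set per : ℕ → V := fun j => if j < b then c j
      else if j < b + ℓ₂ then f₂ (j - b) else f₃ (j - (b + ℓ₂)) with hperdef
    set pre : ℕ → V := fun m => if m < ℓ₀ then f₀ m else f₁ (m - ℓ₀) with hpredef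
    set pext : ℕ → V := fun j => per (j % T) with hpextdef
    set ρ : ℕ → V := fun m => if m < K then pre m else pext (m - K) with hρdef
    have hpv1 : ∀ j < b, per j = c j := fun j hj => by simp only [hperdef, if_pos hj]
    have hpv2 : ∀ t < ℓ₂, per (b + t) = f₂ t := fun t ht => by
      simp only [hperdef, if_neg (by omega : ¬ b + t < b), if_pos (by omega : b + t < b + ℓ₂),
        Nat.add_sub_cancel_left]
    have hpv3 : ∀ t < ℓ₃, per (b + ℓ₂ + t) = f₃ t := fun t ht => by
      simp only [hperdef, if_neg (by omega : ¬ b + ℓ₂ + t < b),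
        if_neg (by omega : ¬ b + ℓ₂ + t < b + ℓ₂), Nat.add_sub_cancel_left]
    have hciter : ∀ q : ℕ, c (q * n) = c 0 := fun q => by
      have := periodic_iter hcper q 0
      rwa [Nat.zero_add] at this
    have hcb : c b = c 0 := by rw [hb, Nat.mul_comm]; exact hciter (N+1)
    have hper0 : per 0 = c 0 := hpv1 0 hbpos
    have hw0c0 : ℓ₂ = 0 → w0 = c 0 := fun h2 => by rw [← hf₂l, h2, hf₂0]
    have hc0w0 : ℓ₃ = 0 → c 0 = w0 := fun h3 => by rw [← hf₃l, h3, hf₃0]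
    have hmodb : per (b % T) = c 0 := by
      by_cases hbT : b < T
      · rw [Nat.mod_eq_of_lt hbT]
        rcases Nat.eq_zero_or_pos ℓ₂ with h2 | h2
        · have h3 : 0 < ℓ₃ := by omega
          have h4 := hpv3 0 h3
          rw [show b + ℓ₂ + 0 = b by omega] at h4
          rw [h4, hf₃0, hw0c0 h2]
        · have h4 := hpv2 0 h2
          rw [Nat.add_zero] at h4
          rw [h4, hf₂0]
      · have hbT' : b = T := by omega
        rw [hbT', Nat.mod_self, hper0]
    have hmodw : per ((b + ℓ₂) % T) = w0 := by
      rcases Nat.eq_zero_or_pos ℓ₃ with h3 | h3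
      · have hbl : b + ℓ₂ = T := by omega
        rw [hbl, Nat.mod_self, hper0, hc0w0 h3]
      · have h4 := hpv3 0 h3
        rw [Nat.add_zero] at h4
        rw [Nat.mod_eq_of_lt (by omega : b + ℓ₂ < T), h4, hf₃0]
    -- edges of pext
    have hpextE : ∀ j, G.E (pext j) (pext (j+1)) := by
      intro j
      show G.E (per (j % T)) (per ((j+1) % T))
      rw [succ_mod T j]
      set s := j % T with hs
      have hsT : s < T := Nat.mod_lt _ hTpos
      rcases Nat.lt_or_ge (s+1) b with hA | hA
      · rw [Nat.mod_eq_of_lt (by omega), hpv1 s (by omega), hpv1 (s+1) hA]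
        exact hcE s
      rcases Nat.eq_or_lt_of_le hA with hB | hB
      · have h1 : per s = c s := hpv1 s (by omega)
        have h2 : per ((s+1) % T) = c (s+1) := by rw [← hB, hmodb, hcb]
        rw [h1, h2]; exact hcE s
      have hsb : b ≤ s := by omega
      rcases Nat.lt_or_ge (s+1) (b+ℓ₂) with hC | hC
      · have ht : s - b < ℓ₂ := by omega
        have h1 := hpv2 (s - b) ht
        rw [show b + (s - b) = s by omega] at h1
        have h2 := hpv2 (s - b + 1) (by omega)
        rw [show b + (s - b + 1) = s + 1 by omega] at h2
        rw [Nat.mod_eq_of_lt (by omega), h1, h2]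
        exact (hf₂E (s - b) ht).1
      rcases Nat.eq_or_lt_of_le hC with hD | hD
      · have hl2 : 0 < ℓ₂ := by omega
        have h1 := hpv2 (ℓ₂ - 1) (by omega)
        rw [show b + (ℓ₂ - 1) = s by omega] at h1
        have h2 : per ((s+1) % T) = f₂ ℓ₂ := by rw [← hD, hmodw, ← hf₂l]
        rw [h1, h2]
        have h5 := (hf₂E (ℓ₂ - 1) (by omega)).1
        rwa [show ℓ₂ - 1 + 1 = ℓ₂ by omega] at h5
      have hsb2 : b + ℓ₂ ≤ s := by omega
      have ht : s - (b + ℓ₂) < ℓ₃ := by omega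
      rcases Nat.lt_or_ge (s+1) T with hE' | hE'
      · have h1 := hpv3 (s - (b + ℓ₂)) ht
        rw [show b + ℓ₂ + (s - (b + ℓ₂)) = s by omega] at h1
        have h2 := hpv3 (s - (b + ℓ₂) + 1) (by omega)
        rw [show b + ℓ₂ + (s - (b + ℓ₂) + 1) = s + 1 by omega] at h2
        rw [Nat.mod_eq_of_lt hE', h1, h2]
        exact (hf₃E _ ht).1
      · have hsT' : s + 1 = T := by omega
        have hl3 : 0 < ℓ₃ := by omega
        have h1 := hpv3 (ℓ₃ - 1) (by omega)
        rw [show b + ℓ₂ + (ℓ₃ - 1) = s by omega] at h1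
        have h2 : per ((s+1) % T) = f₃ ℓ₃ := by rw [hsT', Nat.mod_self, hper0, ← hf₃l]
        rw [h1, h2]
        have h5 := (hf₃E (ℓ₃ - 1) (by omega)).1
        rwa [show ℓ₃ - 1 + 1 = ℓ₃ by omega] at h5
    -- membership of pext
    have hpextC : ∀ j, pext j ∈ C := by
      intro j
      show per (j % T) ∈ C
      set s := j % T with hs
      have hsT : s < T := Nat.mod_lt _ hTpos
      rcases Nat.lt_or_ge s b with h1 | h1
      · rw [hpv1 s h1]; exact hcC s
      rcases Nat.lt_or_ge s (b + ℓ₂) with h2 | h2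
      · have h3 := hpv2 (s - b) (by omega)
        rw [show b + (s - b) = s by omega] at h3
        rw [h3]; exact hf₂C _ (by omega)
      · have h3 := hpv3 (s - (b + ℓ₂)) (by omega)
        rw [show b + ℓ₂ + (s - (b + ℓ₂)) = s by omega] at h3
        rw [h3]; exact hf₃C _ (by omega)
    have hpextw0 : pext (b + ℓ₂) = w0 := hmodw
    have hpextper : ∀ j, pext (j + T) = pext j := fun j => by
      show per ((j + T) % T) = per (j % T)
      rw [Nat.add_mod_right]
    -- the sum over one period
    have hpextsum : ∑ i ∈ Finset.range T, G.w (pext i) (pext (i+1))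
        = ((N:ℝ)+1) * Sc + (S₂ + S₃) := by
      have e1 : ∑ i ∈ Finset.range b, G.w (pext i) (pext (i+1))
          = ((N:ℝ)+1) * Sc := by
        have hsummand : ∀ i < b, G.w (pext i) (pext (i+1)) = G.w (c i) (c (i+1)) := by
          intro i hi
          show G.w (per (i % T)) (per ((i+1) % T)) = _
          rw [Nat.mod_eq_of_lt (by omega : i < T), hpv1 i hi]
          rcases Nat.lt_or_ge (i+1) b with h1 | h1
          · rw [Nat.mod_eq_of_lt (by omega), hpv1 (i+1) h1]
          · have h2 : i + 1 = b := by omega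
            rw [h2, hmodb, hcb]
        rw [Finset.sum_congr rfl (fun i hi => hsummand i (Finset.mem_range.mp hi))]
        have hgper : ∀ i, G.w (c (i + n)) (c (i + n + 1)) = G.w (c i) (c (i+1)) := by
          intro i
          rw [hcper i, show i + n + 1 = (i+1) + n by omega, hcper (i+1)]
        have := sum_periodic_blocks (fun i => G.w (c i) (c (i+1))) n hgper (N+1)
        rw [hb, Nat.mul_comm n (N+1)]
        rw [this]
        push_cast
        rw [hSc]
      have e2 : ∑ i ∈ Finset.Ico b (b + ℓ₂), G.w (pext i) (pext (i+1)) = S₂ := by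
        rw [Finset.sum_Ico_eq_sum_range, Nat.add_sub_cancel_left]
        apply Finset.sum_congr rfl
        intro t ht
        have htl : t < ℓ₂ := Finset.mem_range.mp ht
        show G.w (per ((b + t) % T)) (per ((b + t + 1) % T)) = _
        rw [Nat.mod_eq_of_lt (by omega : b + t < T), hpv2 t htl]
        rcases Nat.lt_or_ge (t+1) ℓ₂ with h1 | h1
        · have h2 := hpv2 (t+1) h1
          rw [Nat.mod_eq_of_lt (by omega : b + t + 1 < T), show b + t + 1 = b + (t+1) by omega, h2]
        · have h2 : t + 1 = ℓ₂ := by omega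
          rw [show b + t + 1 = b + ℓ₂ by omega, hmodw, ← hf₂l, h2]
      have e3 : ∑ i ∈ Finset.Ico (b + ℓ₂) T, G.w (pext i) (pext (i+1)) = S₃ := by
        rw [Finset.sum_Ico_eq_sum_range, show T - (b + ℓ₂) = ℓ₃ by omega]
        apply Finset.sum_congr rfl
        intro t ht
        have htl : t < ℓ₃ := Finset.mem_range.mp ht
        show G.w (per ((b + ℓ₂ + t) % T)) (per ((b + ℓ₂ + t + 1) % T)) = _
        rw [Nat.mod_eq_of_lt (by omega : b + ℓ₂ + t < T), hpv3 t htl]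
        rcases Nat.lt_or_ge (t+1) ℓ₃ with h1 | h1
        · have h2 := hpv3 (t+1) h1
          rw [Nat.mod_eq_of_lt (by omega : b + ℓ₂ + t + 1 < T),
            show b + ℓ₂ + t + 1 = b + ℓ₂ + (t+1) by omega, h2]
        · have h2 : t + 1 = ℓ₃ := by omega
          rw [show b + ℓ₂ + t + 1 = T by omega, Nat.mod_self, hper0, ← hf₃l, h2]
      rw [← Finset.sum_range_add_sum_Ico _ (by omega : b ≤ T),
        ← Finset.sum_Ico_consecutive _ (by omega : b ≤ b + ℓ₂) (by omega : b + ℓ₂ ≤ T),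
        e1, e2, e3]
    -- ρ is a play from q₀
    have hpreE : ∀ m < K, G.E (pre m) (pre (m+1)) := by
      intro m hm
      rcases Nat.lt_or_ge m ℓ₀ with h1 | h1
      · rcases Nat.lt_or_ge (m+1) ℓ₀ with h2 | h2
        · simp only [hpredef, if_pos h1, if_pos h2]
          exact hf₀E m h1
        · have h3 : m + 1 = ℓ₀ := by omega
          simp only [hpredef, if_pos h1, if_neg (by omega : ¬ m + 1 < ℓ₀)]
          rw [show m + 1 - ℓ₀ = 0 by omega, hf₁0, ← hf₀l, ← h3]
          exact hf₀E m h1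
      · have h2 : m - ℓ₀ < ℓ₁ := by omega
        simp only [hpredef, if_neg (by omega : ¬ m < ℓ₀), if_neg (by omega : ¬ m + 1 < ℓ₀)]
        rw [show m + 1 - ℓ₀ = (m - ℓ₀) + 1 by omega]
        exact (hf₁E (m - ℓ₀) h2).1
    have hpreK : pre K = c 0 := by
      simp only [hpredef, if_neg (by omega : ¬ K < ℓ₀)]
      rw [show K - ℓ₀ = ℓ₁ by omega, hf₁l]
    have hpre0 : pre 0 = q₀ := by
      rcases Nat.lt_or_ge 0 ℓ₀ with h1 | h1
      · simp only [hpredef, if_pos h1]; exact hf₀0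
      · have h2 : ℓ₀ = 0 := by omega
        simp only [hpredef, if_neg (by omega : ¬ (0:ℕ) < ℓ₀)]
        rw [h2, Nat.sub_zero, hf₁0, ← hf₀l, h2, hf₀0]
    have hpext0 : pext 0 = c 0 := by
      show per (0 % T) = c 0
      rw [Nat.zero_mod, hper0]
    have hρplay : IsPlay G ρ := by
      intro m
      show G.E (ρ m) (ρ (m+1))
      rcases Nat.lt_or_ge (m+1) K with h1 | h1
      · simp only [hρdef, if_pos (by omega : m < K), if_pos h1]
        exact hpreE m (by omega)
      rcases Nat.eq_or_lt_of_le h1 with h2 | h2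
      · simp only [hρdef, if_pos (by omega : m < K), if_neg (by omega : ¬ m + 1 < K)]
        rw [show m + 1 - K = 0 by omega, hpext0, ← hpreK, h2]
        exact hpreE m (by omega)
      · simp only [hρdef, if_neg (by omega : ¬ m < K), if_neg (by omega : ¬ m + 1 < K)]
        rw [show m + 1 - K = (m - K) + 1 by omega]
        exact hpextE (m - K)
    have hρ0 : ρ 0 = q₀ := by
      rcases Nat.eq_zero_or_pos K with h1 | h1
      · simp only [hρdef, if_neg (by omega : ¬ (0:ℕ) < K)]
        rw [h1, Nat.sub_zero, hpext0, ← hpreK, h1, hpre0]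
      · simp only [hρdef, if_pos h1]; exact hpre0
    have hρmem : ∀ m, K ≤ m → ρ m ∈ C := by
      intro m hm
      simp only [hρdef, if_neg (by omega : ¬ m < K)]
      exact hpextC (m - K)
    -- w0 occurs infinitely often
    have hρw0 : ∀ t : ℕ, ρ (K + (b + ℓ₂) + t * T) = w0 := by
      intro t
      simp only [hρdef, if_neg (by omega : ¬ K + (b + ℓ₂) + t * T < K)]
      rw [show K + (b + ℓ₂) + t * T - K = (b + ℓ₂) + t * T by omega]
      show per (((b + ℓ₂) + t * T) % T) = w0
      rw [Nat.add_mul_mod_self_right]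
      exact hmodw
    have hw0Inf : w0 ∈ InfOcc ρ := by
      rw [InfOcc, Set.mem_setOf_eq, Filter.frequently_atTop]
      intro M0
      refine ⟨K + (b + ℓ₂) + M0 * T, ?_, hρw0 M0⟩
      have : M0 ≤ M0 * T := Nat.le_mul_of_pos_right M0 hTpos
      omega
    have hInfC : InfOcc ρ ⊆ C := by
      intro u hu
      rw [InfOcc, Set.mem_setOf_eq, Filter.frequently_atTop] at hu
      obtain ⟨m, hm, hmu⟩ := hu K
      rw [← hmu]
      exact hρmem m hm
    -- parity win
    have hpw : ParityWin G ρ := by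
      rw [ParityWin]
      have hne : (G.col '' InfOcc ρ).Nonempty := ⟨G.col w0, ⟨w0, hw0Inf, rfl⟩⟩
      have h1 : sInf (G.col '' InfOcc ρ) ≤ p := by
        apply Nat.sInf_le
        exact ⟨w0, hw0Inf, hw0p⟩
      have h2 : p ≤ sInf (G.col '' InfOcc ρ) := by
        obtain ⟨u, hu, hcu⟩ := Nat.sInf_mem hne
        rw [← hcu]
        exact hcol u (hInfC hu)
      have : sInf (G.col '' InfOcc ρ) = p := le_antisymm h1 h2
      rw [this]
      exact hp
    -- payoff computation via cesaro
    have haper : ∀ m, K ≤ m → G.w (ρ (m + T)) (ρ (m + T + 1)) = G.w (ρ m) (ρ (m+1)) := by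
      intro m hm
      have e1 : ρ (m + T) = ρ m := by
        simp only [hρdef, if_neg (by omega : ¬ m + T < K), if_neg (by omega : ¬ m < K)]
        rw [show m + T - K = (m - K) + T by omega]
        exact hpextper (m - K)
      have e2 : ρ (m + T + 1) = ρ (m + 1) := by
        simp only [hρdef, if_neg (by omega : ¬ m + T + 1 < K), if_neg (by omega : ¬ m + 1 < K)]
        rw [show m + T + 1 - K = (m + 1 - K) + T by omega]
        exact hpextper (m + 1 - K)
      rw [e1, e2]
    have hces := cesaro (fun i => G.w (ρ i) (ρ (i+1))) K T hTpos haper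
    have hsumK : ∑ i ∈ Finset.range T, G.w (ρ (K + i)) (ρ (K + i + 1))
        = ((N:ℝ)+1) * Sc + (S₂ + S₃) := by
      rw [← hpextsum]
      apply Finset.sum_congr rfl
      intro i _
      have e1 : ρ (K + i) = pext i := by
        simp only [hρdef, if_neg (by omega : ¬ K + i < K)]
        rw [Nat.add_sub_cancel_left]
      have e2 : ρ (K + i + 1) = pext (i + 1) := by
        simp only [hρdef, if_neg (by omega : ¬ K + i + 1 < K)]
        rw [show K + i + 1 - K = i + 1 by omega]
      rw [e1, e2]
    rw [hsumK] at hces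
    have havg : Tendsto (fun m : ℕ => avgW G ρ m) atTop
        (𝓝 ((((N:ℝ)+1) * Sc + (S₂ + S₃)) / T)) := hces
    have hlimval : liminf (fun m : ℕ => ((avgW G ρ m : ℝ) : EReal)) atTop
        = (((((N:ℝ)+1) * Sc + (S₂ + S₃)) / T : ℝ) : EReal) :=
      ((continuous_coe_real_ereal.tendsto _).comp havg).liminf_eq
    have hpayoff : payoff G ρ = (((((N:ℝ)+1) * Sc + (S₂ + S₃)) / T : ℝ) : EReal) := by
      rw [payoff, if_pos hpw, hlimval]
    have hTcast : ((T:ℕ):ℝ) = ((N:ℝ)+1) * (n:ℝ) + ((ℓ₂:ℝ) + (ℓ₃:ℝ)) := by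
      rw [hT, hb]
      push_cast
      ring
    have hfin : ((((N:ℝ)+1) * Sc + (S₂ + S₃)) / (((N:ℝ)+1) * (n:ℝ) + ((ℓ₂:ℝ) + (ℓ₃:ℝ))) : ℝ)
        = ((((N:ℝ)+1) * Sc + (S₂ + S₃)) / T : ℝ) := by rw [hTcast]
    rw [hfin, ← hpayoff]
    exact le_iSup (fun σ : {ρ : ℕ → V // IsPlay G ρ ∧ ρ 0 = q₀} => payoff G σ.val) ⟨ρ, hρplay, hρ0⟩
  -- pass to the limit in N
  have hnR : (0:ℝ) < n := by exact_mod_cast hn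
  have hlim : Tendsto (fun N : ℕ => (((N:ℝ)+1) * Sc + (S₂ + S₃)) / (((N:ℝ)+1) * (n:ℝ) + ((ℓ₂:ℝ) + (ℓ₃:ℝ))))
      atTop (𝓝 (Sc / n)) := by
    have h1 : Tendsto (fun N : ℕ => Sc + (S₂ + S₃) / ((N:ℝ)+1)) atTop (𝓝 (Sc + 0)) := by
      apply Tendsto.const_add
      exact Tendsto.div_atTop tendsto_const_nhds
        (tendsto_atTop_add_const_right _ 1 tendsto_natCast_atTop_atTop)
    have h2 : Tendsto (fun N : ℕ => (n:ℝ) + (ℓ₂ + ℓ₃ : ℝ) / ((N:ℝ)+1)) atTop (𝓝 ((n:ℝ) + 0)) := by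
      apply Tendsto.const_add
      exact Tendsto.div_atTop tendsto_const_nhds
        (tendsto_atTop_add_const_right _ 1 tendsto_natCast_atTop_atTop)
    rw [add_zero] at h1 h2
    have h3 := h1.div h2 (ne_of_gt hnR)
    apply h3.congr
    intro N
    have hN1 : ((N:ℝ)+1) ≠ 0 := by positivity
    rw [Pi.div_apply]
    have hnum : Sc + (S₂ + S₃) / ((N:ℝ)+1) = (((N:ℝ)+1) * Sc + (S₂ + S₃)) / ((N:ℝ)+1) := by
      field_simp
    have hden : (n:ℝ) + (ℓ₂ + ℓ₃ : ℝ) / ((N:ℝ)+1) = (((N:ℝ)+1) * (n:ℝ) + ((ℓ₂:ℝ) + (ℓ₃:ℝ))) / ((N:ℝ)+1) := by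
      field_simp
    rw [hnum, hden, div_div_div_cancel_right₀ hN1]
  have hcont : Tendsto (fun N : ℕ =>
      (((((N:ℝ)+1) * Sc + (S₂ + S₃)) / (((N:ℝ)+1) * (n:ℝ) + ((ℓ₂:ℝ) + (ℓ₃:ℝ))) : ℝ) : EReal)) atTop
      (𝓝 ((Sc / n : ℝ) : EReal)) :=
    (continuous_coe_real_ereal.tendsto _).comp hlim
  have hle : ((Sc / n : ℝ) : EReal) ≤ (⨆ ρ : {ρ : ℕ → V // IsPlay G ρ ∧ ρ 0 = q₀}, payoff G ρ.val) := by
    apply le_of_tendsto hcont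
    filter_upwards with N
    exact key N
  refine le_trans ?_ hle
  exact EReal.coe_le_coe_iff.mpr hcavg
end Backward


section Forward
open Finset Topology

lemma forward_dir [Fintype V] (G : Game V) (q₀ : V) (x : ℝ)
    (hx : ((x : ℝ) : EReal) ≤ (⨆ ρ : {ρ : ℕ → V // IsPlay G ρ ∧ ρ 0 = q₀}, payoff G ρ.val)) :
    ∃ p : ℕ, Even p ∧ ∃ C : Set V,
        (∀ v ∈ C, p ≤ G.col v) ∧
        (∃ v ∈ C, Relation.ReflTransGen G.E q₀ v) ∧
        (∀ u ∈ C, ∀ v ∈ C,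
          Relation.ReflTransGen (fun a b => G.E a b ∧ a ∈ C ∧ b ∈ C) u v) ∧
        (∃ v ∈ C, G.col v = p) ∧
        (∃ n, 0 < n ∧ ∃ c : ℕ → V, (∀ i, c i ∈ C) ∧ (∀ i, G.E (c i) (c (i + 1))) ∧
          (∀ i, c (i + n) = c i) ∧
          x ≤ (∑ i ∈ Finset.range n, G.w (c i) (c (i + 1))) / n) := by
  classical
  by_contra hRHS
  set k := Fintype.card V with hk
  set Φ : Fin k × (Fin k → V) → ℝ := fun mg =>
    (∑ i ∈ Finset.range ((mg.1 : ℕ)+1),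
      G.w (mg.2 ⟨i % ((mg.1:ℕ)+1), Nat.lt_of_lt_of_le (Nat.mod_lt _ (Nat.succ_pos _)) (Nat.succ_le_of_lt mg.1.isLt)⟩)
          (mg.2 ⟨(i+1) % ((mg.1:ℕ)+1), Nat.lt_of_lt_of_le (Nat.mod_lt _ (Nat.succ_pos _)) (Nat.succ_le_of_lt mg.1.isLt)⟩))
      / (((mg.1:ℕ) : ℝ)+1) with hΦ
  have hPhi : ∀ (m : ℕ) (hm : m < k) (c : ℕ → V), (∀ i, c (i + (m+1)) = c i) →
      (∑ t ∈ Finset.range (m+1), G.w (c t) (c (t+1))) / ((m:ℝ)+1) ∈ Set.range Φ := by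
    intro m hm c hper
    refine ⟨(⟨m, hm⟩, fun j => c j.val), ?_⟩
    rw [hΦ]
    show (∑ i ∈ Finset.range (m+1), G.w (c (i % (m+1))) (c ((i+1) % (m+1)))) / ((m:ℝ)+1) = _
    congr 1
    apply Finset.sum_congr rfl
    intro i hi
    have hi' : i < m + 1 := Finset.mem_range.mp hi
    rw [Nat.mod_eq_of_lt hi']
    rcases Nat.lt_or_ge (i+1) (m+1) with h1 | h1
    · rw [Nat.mod_eq_of_lt h1]
    · have h2 : i + 1 = m + 1 := by omega
      have h3 : c (m+1) = c 0 := by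
        have := hper 0
        rwa [Nat.zero_add] at this
      rw [h2, Nat.mod_self, h3]
  set A : Finset ℝ := insert (x - 1) ((Finset.univ.image Φ).filter (fun a => a < x)) with hA
  have hAne : A.Nonempty := ⟨x - 1, Finset.mem_insert_self _ _⟩
  set y : ℝ := A.max' hAne with hy
  have hins : ∀ a : ℝ, a ∈ A ↔ (a = x - 1 ∨ (a ∈ Finset.univ.image Φ ∧ a < x)) := by
    intro a
    rw [hA]
    simp [Finset.mem_insert, Finset.mem_filter]
  have hyx : y < x := by
    have hmem := A.max'_mem hAne
    rcases (hins _).mp hmem with h | h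
    · rw [hy, h]; linarith
    · exact h.2
  have hbound : ∀ σ : {ρ : ℕ → V // IsPlay G ρ ∧ ρ 0 = q₀}, payoff G σ.val ≤ ((y : ℝ) : EReal) := by
    rintro ⟨ρ, hplay, h0⟩
    show payoff G ρ ≤ _
    rw [payoff]
    split_ifs with hpw
    swap
    · exact bot_le
    obtain ⟨N, hN⟩ := Filter.eventually_atTop.mp (eventually_mem_infOcc ρ)
    set Inf : Set V := InfOcc ρ with hInf
    set AC : Set ℝ := { r | ∃ m : ℕ, m < k ∧ ∃ c : ℕ → V, (∀ i, G.E (c i) (c (i+1))) ∧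
      (∀ i, c (i + (m+1)) = c i) ∧ (∀ i, c i ∈ Inf) ∧
      r = (∑ t ∈ Finset.range (m+1), G.w (c t) (c (t+1))) / ((m:ℝ)+1) } with hACdef
    have hACsub : AC ⊆ Set.range Φ := by
      rintro r ⟨m, hm, c, hE, hper, hC, hr⟩
      rw [hr]; exact hPhi m hm c hper
    have hACfin : AC.Finite := (Set.finite_range Φ).subset hACsub
    have hACne : AC.Nonempty := by
      obtain ⟨i, j, hij, hjk, heq⟩ := exists_repeat (fun t => ρ (N + t))
      have hclose : ρ (N + i + (j - i)) = ρ (N + i + 0) := by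
        rw [show N + i + (j - i) = N + j by omega, Nat.add_zero, ← heq]
      obtain ⟨c', h1, h2, h3, h4⟩ := cyclify G.w G.E Inf (fun t => ρ (N + i + t)) (j - i)
        (by omega) hclose (fun t _ => hplay (N + i + t)) (fun t _ => hN _ (by omega))
      have hm : j - i - 1 < k := by omega
      have hper' : ∀ i', c' (i' + (j - i - 1 + 1)) = c' i' := by
        intro i'
        rw [show j - i - 1 + 1 = j - i by omega]
        exact h2 i'
      exact ⟨_, j - i - 1, hm, c', h1, hper', h3, rfl⟩
    have hACne' : hACfin.toFinset.Nonempty := by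
      rwa [Set.Finite.toFinset_nonempty]
    set M : ℝ := hACfin.toFinset.max' hACne' with hM
    have hMmem : M ∈ AC := by
      have := hACfin.toFinset.max'_mem hACne'
      rwa [Set.Finite.mem_toFinset] at this
    have hMmax : ∀ r ∈ AC, r ≤ M := fun r hr =>
      Finset.le_max' _ _ (hACfin.mem_toFinset.mpr hr)
    have HM : ∀ (L : ℕ) (d : ℕ → V), 0 < L → L ≤ k → (∀ i, G.E (d i) (d (i+1))) →
        (∀ i, d (i + L) = d i) → (∀ i, d i ∈ Inf) →
        ∑ t ∈ Finset.range L, G.w (d t) (d (t+1)) ≤ M * L := by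
      intro L d hL hLk hE hper hC
      have hperL : ∀ i, d (i + (L - 1 + 1)) = d i := by
        intro i; rw [show L - 1 + 1 = L by omega]; exact hper i
      have hmem : (∑ t ∈ Finset.range (L-1+1), G.w (d t) (d (t+1))) / (((L-1:ℕ)):ℝ) ∈ AC →
          True := fun _ => trivial
      have hmem2 : (∑ t ∈ Finset.range (L-1+1), G.w (d t) (d (t+1))) / (((L-1:ℕ):ℝ)+1) ∈ AC :=
        ⟨L - 1, by omega, d, hE, hperL, hC, rfl⟩
      have hle := hMmax _ hmem2
      have hLR : (0:ℝ) < (L:ℝ) := by exact_mod_cast hL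
      have hcast : ((L - 1 : ℕ):ℝ) + 1 = (L:ℝ) := by
        have h1 : (1:ℕ) ≤ L := hL
        push_cast [h1]
        ring
      rw [show L - 1 + 1 = L by omega, hcast, div_le_iff₀ hLR] at hle
      linarith
    have hMx : M < x := by
      by_contra hMx'
      push_neg at hMx'
      apply hRHS
      obtain ⟨m, hm, c, hE, hper, hC, hr⟩ := hMmem
      have hInfne : Inf.Nonempty := infOcc_nonempty ρ
      refine ⟨sInf (G.col '' Inf), hpw, Inf, ?_, ?_, ?_, ?_, m+1, Nat.succ_pos _, c, hC, hE, hper, ?_⟩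
      · intro u hu; exact Nat.sInf_le ⟨u, hu, rfl⟩
      · obtain ⟨u, hu⟩ := hInfne
        obtain ⟨nn, _, hnn⟩ := Filter.frequently_atTop.mp hu 0
        refine ⟨u, hu, ?_⟩
        rw [← h0, ← hnn]
        exact reach_play hplay nn
      · intro a ha v hv; exact infOcc_connected hplay ha hv
      · obtain ⟨u, hu, hcu⟩ := Nat.sInf_mem (hInfne.image G.col)
        exact ⟨u, hu, hcu⟩
      · have hcast : ((m+1:ℕ):ℝ) = (m:ℝ)+1 := by push_cast; ring
        rw [hcast, ← hr]
        exact hMx'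
    have hMy : M ≤ y := by
      apply Finset.le_max'
      apply (hins _).mpr
      right
      obtain ⟨z, hz⟩ := hACsub hMmem
      exact ⟨Finset.mem_image.mpr ⟨z, Finset.mem_univ _, hz⟩, hMx⟩
    -- liminf of the averages is at most M
    set W : ℝ := ∑ uv : V × V, |G.w uv.1 uv.2| with hW
    have hWb : ∀ u v, |G.w u v| ≤ W :=
      fun u v => Finset.single_le_sum (f := fun uv : V × V => |G.w uv.1 uv.2|)
        (fun _ _ => abs_nonneg _) (Finset.mem_univ (u, v))
    have hW0 : 0 ≤ W := Finset.sum_nonneg fun _ _ => abs_nonneg _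
    have hwalk := walk_sum_le G.w G.E Inf M W HM hWb hW0
    set B : ℝ := (k : ℝ) * (W + |M|) with hB
    set SN : ℝ := ∑ i ∈ Finset.range N, G.w (ρ i) (ρ (i+1)) with hSN
    set Cc : ℝ := |SN| + B + |M| * N with hCc
    have havg : ∀ nn : ℕ, N ≤ nn → 0 < nn → avgW G ρ nn ≤ M + Cc / nn := by
      intro nn hn hpos
      have hposR : (0:ℝ) < nn := by exact_mod_cast hpos
      have hseg := hwalk (nn - N) (fun t => ρ (N + t)) (fun t _ => hplay (N + t))
        (fun t _ => hN (N + t) (by omega))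
      have hsplit : ∑ i ∈ Finset.range nn, G.w (ρ i) (ρ (i+1))
          = SN + ∑ t ∈ Finset.range (nn - N), G.w (ρ (N + t)) (ρ (N + t + 1)) := by
        rw [hSN, ← Finset.sum_range_add_sum_Ico _ hn, Finset.sum_Ico_eq_sum_range]
      have hNle : ((nn - N : ℕ):ℝ) = (nn:ℝ) - N := by
        push_cast [hn]
        ring
      have h2 : (-M) * (N:ℝ) ≤ |M| * N :=
        mul_le_mul_of_nonneg_right (neg_le_abs M) (Nat.cast_nonneg N)
      have hSle : ∑ i ∈ Finset.range nn, G.w (ρ i) (ρ (i+1)) ≤ M * nn + Cc := by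
        have h1 : M * ((nn - N:ℕ):ℝ) = M * nn - M * N := by rw [hNle]; ring
        have h3 := le_abs_self SN
        rw [hsplit, hCc]
        have hseg' : ∑ t ∈ Finset.range (nn - N), G.w (ρ (N + t)) (ρ (N + t + 1))
            ≤ M * ((nn - N:ℕ):ℝ) + B := hseg
        nlinarith [hseg', h1, h2, h3]
      show (∑ i ∈ Finset.range nn, G.w (ρ i) (ρ (i+1))) / nn ≤ M + Cc / nn
      rw [div_le_iff₀ hposR]
      have hexp : (M + Cc / nn) * nn = M * nn + Cc := by field_simp
      rw [hexp]
      exact hSle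
    have hg : Tendsto (fun nn : ℕ => M + Cc / nn) atTop (𝓝 M) := by
      have h2 := (tendsto_const_nhds : Tendsto (fun _ : ℕ => M) atTop (𝓝 M)).add
        (tendsto_const_div_atTop_nhds_zero_nat Cc)
      rwa [add_zero] at h2
    have hgE : liminf (fun nn : ℕ => ((M + Cc / nn : ℝ) : EReal)) atTop = ((M:ℝ):EReal) :=
      ((continuous_coe_real_ereal.tendsto _).comp hg).liminf_eq
    have hmono : liminf (fun nn : ℕ => ((avgW G ρ nn : ℝ):EReal)) atTop
        ≤ liminf (fun nn : ℕ => ((M + Cc / nn : ℝ):EReal)) atTop := by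
      refine liminf_le_liminf ?_ (by isBoundedDefault) (by isBoundedDefault)
      filter_upwards [eventually_ge_atTop (max N 1)] with nn hnn
      exact EReal.coe_le_coe_iff.mpr (havg nn (le_of_max_le_left hnn) (le_of_max_le_right hnn))
    calc liminf (fun nn : ℕ => ((avgW G ρ nn : ℝ):EReal)) atTop
        ≤ ((M:ℝ):EReal) := by rw [← hgE]; exact hmono
      _ ≤ ((y:ℝ):EReal) := EReal.coe_le_coe_iff.mpr hMy
  have hsup := iSup_le hbound
  have hxy := le_trans hx hsup
  rw [EReal.coe_le_coe_iff] at hxy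
  linarith
end Forward

/-- the one-player value sup over infinite paths from q₀ of the
payoff is ≥ x iff there is an even priority p and a strongly connected
subgraph C of the subgraph induced by states of priority ≥ p, reachable from
q₀, containing a state of priority p and a cycle of average weight ≥ x. -/
theorem one_player_value_characterization {V : Type} [Fintype V] (G : Game V)
    (hsucc : ∀ v, ∃ u, G.E v u) (q₀ : V) (x : ℚ) :
    ((x : ℝ) : EReal) ≤ (⨆ ρ : {ρ : ℕ → V // IsPlay G ρ ∧ ρ 0 = q₀}, payoff G ρ.val) ↔
      ∃ p : ℕ, Even p ∧ ∃ C : Set V,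
        (∀ v ∈ C, p ≤ G.col v) ∧
        (∃ v ∈ C, Relation.ReflTransGen G.E q₀ v) ∧
        (∀ u ∈ C, ∀ v ∈ C,
          Relation.ReflTransGen (fun a b => G.E a b ∧ a ∈ C ∧ b ∈ C) u v) ∧
        (∃ v ∈ C, G.col v = p) ∧
        (∃ n, 0 < n ∧ ∃ c : ℕ → V, (∀ i, c i ∈ C) ∧ (∀ i, G.E (c i) (c (i + 1))) ∧
          (∀ i, c (i + n) = c i) ∧
          (x : ℝ) ≤ (∑ i ∈ Finset.range n, G.w (c i) (c (i + 1))) / n) :=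
  ⟨fun hx => forward_dir G q₀ (x : ℝ) hx, fun h => backward_dir G q₀ (x : ℝ) h⟩
end

section
/- Let G be a strongly connected finite weighted graph (all vertices Player 1's), let q be a vertex with even priority p = min col(G), and let w be the maximum average weight over cycles of G. Then there is a strategy for Player 1 (playing rounds: reach q, then follow a maximum-mean cycle for i steps in round i) whose unique induced play ρ satisfies: q ∈ Inf(ρ), the parity condition holds, and liminf_n payoff_n(ρ) = w. -/
open Filter

variable {V : Type}

namespace SCPlay

structure FPath (G : Game V) (a b : V) where
  len : ℕ
  f : ℕ → V
  h0 : f 0 = a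
  hend : f len = b
  edge : ∀ i, i < len → G.E (f i) (f (i + 1))

noncomputable def FPath.wsum {G : Game V} {a b : V} (p : FPath G a b) : ℝ :=
  ∑ i ∈ Finset.range p.len, G.w (p.f i) (p.f (i + 1))

def FPath.comp {G : Game V} {a b c : V} (p : FPath G a b) (q : FPath G b c) : FPath G a c where
  len := p.len + q.len
  f i := if i < p.len then p.f i else q.f (i - p.len)
  h0 := by
    rcases Nat.eq_zero_or_pos p.len with h | h
    · have hb : a = b := by
        have h2 := p.hend; rw [h] at h2; rw [← p.h0, h2]
      simp [h, q.h0, hb]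
    · simp [h, p.h0]
  hend := by
    have h : ¬ p.len + q.len < p.len := by omega
    simp [h, q.hend]
  edge := by
    intro i hi
    rcases lt_or_ge i p.len with h | h
    · rcases lt_or_ge (i + 1) p.len with h2 | h2
      · simpa [h, h2] using p.edge i h
      · have h3 : i + 1 = p.len := by omega
        have h4 : ¬ (i + 1 < p.len) := by omega
        have h5 : q.f (i + 1 - p.len) = p.f (i + 1) := by
          rw [h3]; simp [q.h0, ← p.hend]
        simp only [if_pos h, if_neg h4, h5]
        exact p.edge i h
    · have hq : i - p.len < q.len := by omega
      have h1 : ¬ i < p.len := by omega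
      have h2 : ¬ i + 1 < p.len := by omega
      have h3 : i + 1 - p.len = (i - p.len) + 1 := by omega
      simp only [if_neg h1, if_neg h2, h3]
      exact q.edge _ hq

theorem FPath.comp_len {G : Game V} {a b c : V} (p : FPath G a b) (q : FPath G b c) :
    (p.comp q).len = p.len + q.len := rfl

theorem FPath.comp_f_left {G : Game V} {a b c : V} (p : FPath G a b) (q : FPath G b c)
    {i : ℕ} (h : i ≤ p.len) : (p.comp q).f i = p.f i := by
  rcases lt_or_eq_of_le h with h | h
  · simp [FPath.comp, h]
  · subst h
    have h2 : ¬ p.len < p.len := lt_irrefl _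
    simp [FPath.comp, h2, q.h0, p.hend]

theorem FPath.comp_f_right {G : Game V} {a b c : V} (p : FPath G a b) (q : FPath G b c)
    (j : ℕ) : (p.comp q).f (p.len + j) = q.f j := by
  have h1 : ¬ p.len + j < p.len := by omega
  simp [FPath.comp, h1]

theorem FPath.wsum_comp {G : Game V} {a b c : V} (p : FPath G a b) (q : FPath G b c) :
    (p.comp q).wsum = p.wsum + q.wsum := by
  unfold FPath.wsum
  rw [FPath.comp_len, Finset.sum_range_add]
  congr 1
  · refine Finset.sum_congr rfl fun i hi => ?_
    rw [Finset.mem_range] at hi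
    rw [FPath.comp_f_left _ _ (le_of_lt hi), FPath.comp_f_left _ _ (by omega)]
  · refine Finset.sum_congr rfl fun j hj => ?_
    rw [FPath.comp_f_right, show p.len + j + 1 = p.len + (j + 1) from rfl,
      FPath.comp_f_right]

theorem exists_fpath {G : Game V} {a b : V} (h : Relation.ReflTransGen G.E a b) :
    Nonempty (FPath G a b) := by
  induction h with
  | refl => exact ⟨⟨0, fun _ => a, rfl, rfl, fun i hi => absurd hi (Nat.not_lt_zero i)⟩⟩
  | @tail b' c' hab hbc ih =>
    obtain ⟨p⟩ := ih
    refine ⟨⟨p.len + 1, fun i => if i ≤ p.len then p.f i else c', by simp [p.h0],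
      by simp, ?_⟩⟩
    intro i hi
    rcases lt_or_ge (i + 1) (p.len + 1) with h2 | h2
    · have h3 : i + 1 ≤ p.len := by omega
      simp only [if_pos (by omega : i ≤ p.len), if_pos h3]
      exact p.edge i (by omega)
    · have hi' : i = p.len := by omega
      simp only [if_pos (le_of_eq hi'), if_neg (by omega : ¬ i + 1 ≤ p.len)]
      rw [hi', p.hend]; exact hbc

def T (ℓ : ℕ → ℕ) : ℕ → ℕ
  | 0 => 0
  | k + 1 => T ℓ k + ℓ k

def Kf (ℓ : ℕ → ℕ) (N : ℕ) : ℕ := Nat.findGreatest (fun k => T ℓ k ≤ N) N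

def glue (ℓ : ℕ → ℕ) (g : ℕ → ℕ → V) (N : ℕ) : V := g (Kf ℓ N) (N - T ℓ (Kf ℓ N))

variable {ℓ : ℕ → ℕ} {g : ℕ → ℕ → V}

theorem le_T (hpos : ∀ k, 0 < ℓ k) : ∀ k, k ≤ T ℓ k := by
  intro k; induction k with
  | zero => exact Nat.zero_le _
  | succ k ih => have := hpos k; show k + 1 ≤ T ℓ k + ℓ k; omega

theorem T_mono (hpos : ∀ k, 0 < ℓ k) : StrictMono (T ℓ) :=
  strictMono_nat_of_lt_succ fun k => by have := hpos k; show T ℓ k < T ℓ k + ℓ k; omega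

theorem T_eq_sum (ℓ : ℕ → ℕ) (k : ℕ) : T ℓ k = ∑ m ∈ Finset.range k, ℓ m := by
  induction k with
  | zero => rfl
  | succ k ih => rw [Finset.sum_range_succ, ← ih]; rfl

theorem T_K_le (N : ℕ) : T ℓ (Kf ℓ N) ≤ N :=
  Nat.findGreatest_spec (P := fun k => T ℓ k ≤ N) (Nat.zero_le N)
    (show T ℓ 0 ≤ N from Nat.zero_le N)

theorem lt_T_K_succ (hpos : ∀ k, 0 < ℓ k) (N : ℕ) : N < T ℓ (Kf ℓ N + 1) := by
  by_contra h
  push_neg at h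
  exact Nat.findGreatest_is_greatest (Nat.lt_succ_self _)
    (le_trans (le_T hpos _) h) h

theorem Kf_eq (hpos : ∀ k, 0 < ℓ k) {k N : ℕ} (h1 : T ℓ k ≤ N) (h2 : N < T ℓ (k + 1)) :
    Kf ℓ N = k := by
  have hk : k ≤ Kf ℓ N := Nat.le_findGreatest (le_trans (le_T hpos k) h1) h1
  rcases eq_or_lt_of_le hk with h | h
  · exact h.symm
  · exfalso
    have : T ℓ (k + 1) ≤ T ℓ (Kf ℓ N) := (T_mono hpos).monotone h
    have := T_K_le (ℓ := ℓ) N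
    omega

theorem glue_eval (hpos : ∀ k, 0 < ℓ k) (hlink : ∀ k, g k (ℓ k) = g (k + 1) 0)
    {k j : ℕ} (h : j ≤ ℓ k) : glue ℓ g (T ℓ k + j) = g k j := by
  rcases lt_or_eq_of_le h with h | h
  · unfold glue
    rw [Kf_eq hpos (Nat.le_add_right _ _)
      (show T ℓ k + j < T ℓ k + ℓ k by omega)]
    congr 1; omega
  · subst h
    have hT : T ℓ k + ℓ k = T ℓ (k + 1) + 0 := rfl
    rw [hT]
    unfold glue
    rw [Kf_eq hpos (Nat.le_add_right _ _)
      (show T ℓ (k + 1) + 0 < T ℓ (k + 1) + ℓ (k + 1) by have := hpos (k + 1); omega)]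
    simp [hlink k]

theorem glue_isPlay {G : Game V} (hpos : ∀ k, 0 < ℓ k)
    (hlink : ∀ k, g k (ℓ k) = g (k + 1) 0)
    (hedge : ∀ k i, i < ℓ k → G.E (g k i) (g k (i + 1))) :
    IsPlay G (glue ℓ g) := by
  intro N
  have h1 : T ℓ (Kf ℓ N) ≤ N := T_K_le N
  have h2 : N < T ℓ (Kf ℓ N) + ℓ (Kf ℓ N) := lt_T_K_succ hpos N
  set k := Kf ℓ N with hk
  have hjl : N - T ℓ k < ℓ k := by omega
  have e1 : glue ℓ g (T ℓ k + (N - T ℓ k)) = g k (N - T ℓ k) :=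
    glue_eval hpos hlink (le_of_lt hjl)
  have e2 : glue ℓ g (T ℓ k + (N - T ℓ k + 1)) = g k (N - T ℓ k + 1) :=
    glue_eval hpos hlink (by omega)
  rw [show T ℓ k + (N - T ℓ k) = N by omega] at e1
  rw [show T ℓ k + (N - T ℓ k + 1) = N + 1 by omega] at e2
  rw [e1, e2]
  exact hedge _ _ hjl

theorem glue_sum {G : Game V} (hpos : ∀ k, 0 < ℓ k)
    (hlink : ∀ k, g k (ℓ k) = g (k + 1) 0) (k : ℕ) :
    ∑ i ∈ Finset.range (T ℓ k), G.w (glue ℓ g i) (glue ℓ g (i + 1)) =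
      ∑ m ∈ Finset.range k,
        ∑ j ∈ Finset.range (ℓ m), G.w (g m j) (g m (j + 1)) := by
  induction k with
  | zero => rfl
  | succ k ih =>
    rw [show T ℓ (k + 1) = T ℓ k + ℓ k from rfl, Finset.sum_range_add, ih,
      Finset.sum_range_succ]
    congr 1
    refine Finset.sum_congr rfl fun j hj => ?_
    rw [Finset.mem_range] at hj
    rw [glue_eval hpos hlink (le_of_lt hj),
      show T ℓ k + j + 1 = T ℓ k + (j + 1) from rfl,
      glue_eval hpos hlink (by omega : j + 1 ≤ ℓ k)]

end SCPlay

set_option maxHeartbeats 1600000 in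
/-- in a strongly connected weighted graph with minimal priority
p even, attained at a state q, and maximum cycle average weight w, from every
start state there is a play visiting q infinitely often, satisfying the parity
condition, whose liminf average weight equals w. -/
theorem strongly_connected_optimal_play {V : Type} [Fintype V] (G : Game V)
    (hsc : ∀ u v : V, Relation.ReflTransGen G.E u v)
    (q : V) (p : ℕ) (hq : G.col q = p) (hmin : ∀ v, p ≤ G.col v) (hp : Even p)
    (w : ℝ)
    (hcyc : ∃ n, 0 < n ∧ ∃ c : ℕ → V, (∀ i, G.E (c i) (c (i + 1))) ∧
      (∀ i, c (i + n) = c i) ∧ (∑ i ∈ Finset.range n, G.w (c i) (c (i + 1))) / n = w)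
    (hmax : ∀ n, 0 < n → ∀ c : ℕ → V, (∀ i, G.E (c i) (c (i + 1))) →
      (∀ i, c (i + n) = c i) → (∑ i ∈ Finset.range n, G.w (c i) (c (i + 1))) / n ≤ w)
    (q₀ : V) :
    ∃ ρ : ℕ → V, IsPlay G ρ ∧ ρ 0 = q₀ ∧ q ∈ InfOcc ρ ∧ ParityWin G ρ ∧
      Filter.liminf (fun n => ((avgW G ρ n : ℝ) : EReal)) atTop = (w : EReal) := by
  classical
  clear hmax
  obtain ⟨n, hn, c, hcE, hcper, hcavg⟩ := hcyc
  have hnR : (0 : ℝ) < n := by exact_mod_cast hn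
  have hcsum : ∑ i ∈ Finset.range n, G.w (c i) (c (i + 1)) = n * w := by
    rw [div_eq_iff (ne_of_gt hnR)] at hcavg
    linarith
  -- bound on weights
  obtain ⟨M0, hM0⟩ := Finset.exists_le
    ((Finset.univ : Finset (V × V)).image fun pr => |G.w pr.1 pr.2|)
  obtain ⟨M, hMeq⟩ : ∃ x : ℝ, x = max M0 0 := ⟨_, rfl⟩
  have hM : ∀ u v : V, |G.w u v| ≤ M := by
    intro u v
    rw [hMeq]
    refine le_trans (hM0 _ ?_) (le_max_left _ _)
    exact Finset.mem_image.mpr ⟨(u, v), Finset.mem_univ _, rfl⟩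
  have hM0' : (0 : ℝ) ≤ M := by rw [hMeq]; exact le_max_right _ _
  -- periodicity
  have hper : ∀ m j, c (j + m * n) = c j := by
    intro m
    induction m with
    | zero => simp
    | succ m ih =>
      intro j
      have h1 : j + (m + 1) * n = (j + m * n) + n := by ring
      rw [h1, hcper, ih]
  have hcend : ∀ m, c (m * n) = c 0 := fun m => by simpa using hper m 0
  let cyc : ℕ → SCPlay.FPath G (c 0) (c 0) := fun m =>
    ⟨m * n, c, rfl, hcend m, fun i _ => hcE i⟩
  have hcycsum : ∀ m, (cyc m).wsum = (m : ℝ) * ((n : ℝ) * w) := by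
    intro m
    induction m with
    | zero => simp [SCPlay.FPath.wsum, cyc]
    | succ m ih =>
      have h1 : (cyc (m + 1)).wsum
          = (cyc m).wsum
            + ∑ j ∈ Finset.range n, G.w (c (m * n + j)) (c (m * n + j + 1)) := by
        show (∑ i ∈ Finset.range ((m + 1) * n), G.w (c i) (c (i + 1))) = _
        rw [show (m + 1) * n = m * n + n by ring, Finset.sum_range_add]
        rfl
      have h2 : ∑ j ∈ Finset.range n, G.w (c (m * n + j)) (c (m * n + j + 1))
          = ∑ j ∈ Finset.range n, G.w (c j) (c (j + 1)) := by
        refine Finset.sum_congr rfl fun j _ => ?_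
        rw [show m * n + j + 1 = (j + 1) + m * n by ring, hper,
          show m * n + j = j + m * n by ring, hper]
      rw [h1, h2, ih, hcsum]
      push_cast
      ring
  obtain ⟨P0⟩ := SCPlay.exists_fpath (G := G) (hsc q₀ q)
  obtain ⟨A⟩ := SCPlay.exists_fpath (G := G) (hsc q (c 0))
  obtain ⟨B⟩ := SCPlay.exists_fpath (G := G) (hsc (c 0) q)
  let blk : ℕ → SCPlay.FPath G q q := fun k => A.comp ((cyc (k + 1)).comp B)
  let seg0 : SCPlay.FPath G q₀ q := P0.comp (blk 0)
  have hblklen : ∀ k, (blk k).len = A.len + ((k + 1) * n + B.len) := fun _ => rfl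
  have hseg0len : seg0.len = P0.len + (A.len + (1 * n + B.len)) := rfl
  have hblksum : ∀ k, (blk k).wsum
      = A.wsum + (((k + 1 : ℕ) : ℝ) * ((n : ℝ) * w) + B.wsum) := by
    intro k
    show (A.comp ((cyc (k + 1)).comp B)).wsum = _
    rw [SCPlay.FPath.wsum_comp, SCPlay.FPath.wsum_comp, hcycsum (k + 1)]
  have hseg0sum : seg0.wsum
      = P0.wsum + (A.wsum + (((0 + 1 : ℕ) : ℝ) * ((n : ℝ) * w) + B.wsum)) := by
    show (P0.comp (blk 0)).wsum = _
    rw [SCPlay.FPath.wsum_comp, hblksum 0]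
  -- package the construction
  obtain ⟨ℓ, g, L, D, hD0, hlow, hup, hlink, hedge, hg00, hgq, hdev⟩ :
      ∃ (ℓ : ℕ → ℕ) (g : ℕ → ℕ → V) (L : ℕ) (D : ℝ),
        0 ≤ D ∧ (∀ k, k + 1 ≤ ℓ k) ∧ (∀ k, ℓ k ≤ L + (k + 1) * n) ∧
        (∀ k, g k (ℓ k) = g (k + 1) 0) ∧
        (∀ k i, i < ℓ k → G.E (g k i) (g k (i + 1))) ∧
        g 0 0 = q₀ ∧ (∀ k, g (k + 1) 0 = q) ∧
        (∀ m, |(∑ j ∈ Finset.range (ℓ m), G.w (g m j) (g m (j + 1)))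
          - (ℓ m : ℝ) * w| ≤ D) := by
    refine ⟨fun k => match k with | 0 => seg0.len | k + 1 => (blk (k + 1)).len,
      fun k => match k with | 0 => seg0.f | k + 1 => (blk (k + 1)).f,
      P0.len + A.len + B.len,
      |P0.wsum| + |A.wsum| + |B.wsum| + ((P0.len + A.len + B.len : ℕ) : ℝ) * |w|,
      by positivity, ?_, ?_, ?_, ?_, ?_, ?_, ?_⟩
    · intro k
      cases k with
      | zero =>
        show 0 + 1 ≤ seg0.len
        rw [hseg0len]
        have h1 : 1 * n = n := one_mul n
        omega
      | succ k =>
        show k + 1 + 1 ≤ (blk (k + 1)).len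
        rw [hblklen]
        have h1 : k + 1 + 1 ≤ (k + 1 + 1) * n := Nat.le_mul_of_pos_right _ hn
        linarith
    · intro k
      cases k with
      | zero =>
        show seg0.len ≤ P0.len + A.len + B.len + (0 + 1) * n
        rw [hseg0len]
        omega
      | succ k =>
        show (blk (k + 1)).len ≤ P0.len + A.len + B.len + (k + 1 + 1) * n
        rw [hblklen]
        linarith
    · intro k
      cases k with
      | zero =>
        show seg0.f seg0.len = (blk (0 + 1)).f 0
        rw [seg0.hend, (blk (0 + 1)).h0]
      | succ k =>
        show (blk (k + 1)).f (blk (k + 1)).len = (blk (k + 1 + 1)).f 0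
        rw [(blk (k + 1)).hend, (blk (k + 1 + 1)).h0]
    · intro k
      cases k with
      | zero => exact seg0.edge
      | succ k => exact (blk (k + 1)).edge
    · exact seg0.h0
    · intro k
      exact (blk (k + 1)).h0
    · intro m
      cases m with
      | zero =>
        show |seg0.wsum - ((seg0.len : ℕ) : ℝ) * w|
          ≤ |P0.wsum| + |A.wsum| + |B.wsum| + ((P0.len + A.len + B.len : ℕ) : ℝ) * |w|
        rw [hseg0sum, hseg0len]
        push_cast
        have hlr : (0 : ℝ) ≤ (P0.len : ℝ) + A.len + B.len := by positivity
        have h1 : ((P0.len : ℝ) + A.len + B.len) * w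
            ≤ ((P0.len : ℝ) + A.len + B.len) * |w| :=
          mul_le_mul_of_nonneg_left (le_abs_self w) hlr
        have h2 : ((P0.len : ℝ) + A.len + B.len) * (-|w|)
            ≤ ((P0.len : ℝ) + A.len + B.len) * w :=
          mul_le_mul_of_nonneg_left (neg_abs_le w) hlr
        rw [abs_le]
        constructor <;>
          nlinarith [le_abs_self P0.wsum, neg_abs_le P0.wsum, le_abs_self A.wsum,
            neg_abs_le A.wsum, le_abs_self B.wsum, neg_abs_le B.wsum]
      | succ m =>
        show |(blk (m + 1)).wsum - (((blk (m + 1)).len : ℕ) : ℝ) * w|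
          ≤ |P0.wsum| + |A.wsum| + |B.wsum| + ((P0.len + A.len + B.len : ℕ) : ℝ) * |w|
        rw [hblksum, hblklen]
        push_cast
        have hlr : (0 : ℝ) ≤ (A.len : ℝ) + B.len := by positivity
        have h1 : ((A.len : ℝ) + B.len) * w ≤ ((A.len : ℝ) + B.len) * |w| :=
          mul_le_mul_of_nonneg_left (le_abs_self w) hlr
        have h2 : ((A.len : ℝ) + B.len) * (-|w|) ≤ ((A.len : ℝ) + B.len) * w :=
          mul_le_mul_of_nonneg_left (neg_abs_le w) hlr
        have h3 : ((A.len : ℝ) + B.len) * |w| ≤ ((P0.len : ℝ) + A.len + B.len) * |w| := by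
          have : (0 : ℝ) ≤ (P0.len : ℝ) := by positivity
          nlinarith [abs_nonneg w]
        rw [abs_le]
        constructor <;>
          nlinarith [le_abs_self P0.wsum, le_abs_self A.wsum,
            neg_abs_le A.wsum, le_abs_self B.wsum, neg_abs_le B.wsum,
            abs_nonneg P0.wsum, abs_nonneg w,
            mul_nonneg (Nat.cast_nonneg P0.len : (0:ℝ) ≤ P0.len) (abs_nonneg w)]
  clear hblklen hseg0len hblksum hseg0sum hcycsum
  have hpos : ∀ k, 0 < ℓ k := fun k => lt_of_lt_of_le (Nat.succ_pos k) (hlow k)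
  -- facts about the glued play
  have hplay : IsPlay G (SCPlay.glue ℓ g) := SCPlay.glue_isPlay hpos hlink hedge
  have h0 : SCPlay.glue ℓ g 0 = q₀ := by
    have h : SCPlay.glue ℓ g (SCPlay.T ℓ 0 + 0) = g 0 0 :=
      SCPlay.glue_eval hpos hlink (Nat.zero_le _)
    rw [show SCPlay.T ℓ 0 + 0 = 0 from rfl] at h
    rw [h]
    exact hg00
  have hq' : ∀ k, SCPlay.glue ℓ g (SCPlay.T ℓ (k + 1)) = q := by
    intro k
    have h : SCPlay.glue ℓ g (SCPlay.T ℓ k + ℓ k) = g k (ℓ k) :=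
      SCPlay.glue_eval hpos hlink le_rfl
    rw [show SCPlay.T ℓ k + ℓ k = SCPlay.T ℓ (k + 1) from rfl] at h
    rw [h, hlink k]
    exact hgq k
  have hqInf : q ∈ InfOcc (SCPlay.glue ℓ g) := by
    show ∃ᶠ m in atTop, SCPlay.glue ℓ g m = q
    rw [Filter.frequently_atTop]
    intro a
    exact ⟨SCPlay.T ℓ (a + 1), by have := SCPlay.le_T hpos (a + 1); omega, hq' a⟩
  have hpar : ParityWin G (SCPlay.glue ℓ g) := by
    have h1 : p ∈ G.col '' InfOcc (SCPlay.glue ℓ g) := ⟨q, hqInf, hq⟩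
    have h2 : sInf (G.col '' InfOcc (SCPlay.glue ℓ g)) = p := by
      refine le_antisymm (Nat.sInf_le h1) (le_csInf ⟨p, h1⟩ ?_)
      rintro m ⟨v, -, rfl⟩
      exact hmin v
    show Even (sInf (G.col '' InfOcc (SCPlay.glue ℓ g)))
    rw [h2]
    exact hp
  -- constants
  obtain ⟨A', hA'eq⟩ : ∃ x : ℝ, x = ((L : ℝ) + n) * (M + |w|) := ⟨_, rfl⟩
  obtain ⟨B', hB'eq⟩ : ∃ x : ℝ, x = (n : ℝ) * (M + |w|) + D := ⟨_, rfl⟩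
  obtain ⟨E, hEeq⟩ : ∃ x : ℝ, x = 2 * (A' + B') := ⟨_, rfl⟩
  have hA'0 : 0 ≤ A' := by rw [hA'eq]; positivity
  have hB'0 : 0 ≤ B' := by rw [hB'eq]; positivity
  -- partial sums at block boundaries
  have hS2 : ∀ k, |(∑ i ∈ Finset.range (SCPlay.T ℓ k),
      G.w (SCPlay.glue ℓ g i) (SCPlay.glue ℓ g (i + 1))) - (SCPlay.T ℓ k : ℝ) * w|
      ≤ (k : ℝ) * D := by
    intro k
    rw [SCPlay.glue_sum hpos hlink k]
    have hTk : ((SCPlay.T ℓ k : ℕ) : ℝ) = ∑ m ∈ Finset.range k, (ℓ m : ℝ) := by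
      rw [SCPlay.T_eq_sum]
      push_cast
      rfl
    rw [hTk, Finset.sum_mul, ← Finset.sum_sub_distrib]
    refine le_trans (Finset.abs_sum_le_sum_abs _ _) ?_
    calc ∑ m ∈ Finset.range k,
        |(∑ j ∈ Finset.range (ℓ m), G.w (g m j) (g m (j + 1))) - (ℓ m : ℝ) * w|
        ≤ ∑ _m ∈ Finset.range k, D := Finset.sum_le_sum fun m _ => hdev m
      _ = (k : ℝ) * D := by rw [Finset.sum_const, Finset.card_range, nsmul_eq_mul]
  -- global bound
  have hSbound : ∀ N, |(∑ i ∈ Finset.range N,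
      G.w (SCPlay.glue ℓ g i) (SCPlay.glue ℓ g (i + 1))) - (N : ℝ) * w|
      ≤ A' + B' * (SCPlay.Kf ℓ N : ℝ) := by
    intro N
    have h1 : SCPlay.T ℓ (SCPlay.Kf ℓ N) ≤ N := SCPlay.T_K_le N
    have h2 : N < SCPlay.T ℓ (SCPlay.Kf ℓ N) + ℓ (SCPlay.Kf ℓ N) :=
      SCPlay.lt_T_K_succ hpos N
    have hT2 := hS2 (SCPlay.Kf ℓ N)
    set k := SCPlay.Kf ℓ N with hkdef
    set t := SCPlay.T ℓ k with htdef
    set j := N - t with hjdef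
    have hjl : j < ℓ k := by omega
    have hNj : N = t + j := by omega
    have hsplit : (∑ i ∈ Finset.range N,
        G.w (SCPlay.glue ℓ g i) (SCPlay.glue ℓ g (i + 1)))
        = (∑ i ∈ Finset.range t, G.w (SCPlay.glue ℓ g i) (SCPlay.glue ℓ g (i + 1)))
          + ∑ i ∈ Finset.range j,
              G.w (SCPlay.glue ℓ g (t + i)) (SCPlay.glue ℓ g (t + i + 1)) := by
      conv_lhs => rw [hNj]
      rw [Finset.sum_range_add]
    set St := ∑ i ∈ Finset.range t,
      G.w (SCPlay.glue ℓ g i) (SCPlay.glue ℓ g (i + 1)) with hStdef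
    set R := ∑ i ∈ Finset.range j,
      G.w (SCPlay.glue ℓ g (t + i)) (SCPlay.glue ℓ g (t + i + 1)) with hRdef
    have hR : |R| ≤ (j : ℝ) * M := by
      rw [hRdef]
      refine le_trans (Finset.abs_sum_le_sum_abs _ _) ?_
      calc ∑ i ∈ Finset.range j,
          |G.w (SCPlay.glue ℓ g (t + i)) (SCPlay.glue ℓ g (t + i + 1))|
          ≤ ∑ _i ∈ Finset.range j, M := Finset.sum_le_sum fun i _ => hM _ _
        _ = (j : ℝ) * M := by rw [Finset.sum_const, Finset.card_range, nsmul_eq_mul]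
    have hNr : (N : ℝ) = (t : ℝ) + (j : ℝ) := by exact_mod_cast hNj
    have hjb : (j : ℝ) ≤ (L : ℝ) + ((k : ℝ) + 1) * n := by
      have h3 : j ≤ L + (k + 1) * n := le_trans (le_of_lt hjl) (hup k)
      exact_mod_cast h3
    rw [hsplit]
    have harg : (St + R) - (N : ℝ) * w = (St - (t : ℝ) * w) + (R - (j : ℝ) * w) := by
      rw [hNr]; ring
    rw [harg, hA'eq, hB'eq]
    have h3 : |(St - (t : ℝ) * w) + (R - (j : ℝ) * w)|
        ≤ |St - (t : ℝ) * w| + (|R| + (j : ℝ) * |w|) := by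
      refine le_trans (abs_add_le _ _) ?_
      have h4 : |R - (j : ℝ) * w| ≤ |R| + (j : ℝ) * |w| := by
        refine le_trans (abs_sub _ _) ?_
        rw [abs_mul, Nat.abs_cast]
      linarith
    have h4 : (j : ℝ) * (M + |w|) ≤ ((L : ℝ) + ((k : ℝ) + 1) * n) * (M + |w|) :=
      mul_le_mul_of_nonneg_right hjb (by positivity)
    nlinarith [hT2, hR, abs_nonneg w]
  -- quadratic growth
  have hGauss : ∀ k : ℕ, k * (k + 1) ≤ 2 * SCPlay.T ℓ k := by
    intro k
    rw [SCPlay.T_eq_sum]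
    have h2 : 2 * ∑ m ∈ Finset.range k, (m + 1) = k * (k + 1) := by
      induction k with
      | zero => rfl
      | succ k ih => rw [Finset.sum_range_succ, Nat.mul_add, ih]; ring
    have h1 : ∑ m ∈ Finset.range k, (m + 1) ≤ ∑ m ∈ Finset.range k, ℓ m :=
      Finset.sum_le_sum fun m _ => hlow m
    linarith
  have hKN : ∀ N, SCPlay.Kf ℓ N * SCPlay.Kf ℓ N ≤ 2 * N := by
    intro N
    have h1 := SCPlay.T_K_le (ℓ := ℓ) N
    have h2 := hGauss (SCPlay.Kf ℓ N)
    have h3 : SCPlay.Kf ℓ N * SCPlay.Kf ℓ N ≤ SCPlay.Kf ℓ N * (SCPlay.Kf ℓ N + 1) :=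
      Nat.mul_le_mul (le_refl _) (by omega)
    linarith
  have hKtend : Tendsto (fun N => SCPlay.Kf ℓ N) atTop atTop := by
    rw [tendsto_atTop_atTop]
    intro b
    exact ⟨SCPlay.T ℓ b, fun N hN =>
      Nat.le_findGreatest (le_trans (SCPlay.le_T hpos b) hN) hN⟩
  have hEv : ∀ᶠ N in atTop,
      |avgW G (SCPlay.glue ℓ g) N - w| ≤ E / (SCPlay.Kf ℓ N : ℝ) := by
    filter_upwards [hKtend.eventually_ge_atTop 1, eventually_ge_atTop 1] with N hK1 hN1
    have hNpos : (0 : ℝ) < (N : ℝ) := by exact_mod_cast hN1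
    have hKpos : (0 : ℝ) < (SCPlay.Kf ℓ N : ℝ) := by exact_mod_cast hK1
    have hN0 : (N : ℝ) ≠ 0 := ne_of_gt hNpos
    have havg : avgW G (SCPlay.glue ℓ g) N - w
        = ((∑ i ∈ Finset.range N,
            G.w (SCPlay.glue ℓ g i) (SCPlay.glue ℓ g (i + 1))) - (N : ℝ) * w) / N := by
      unfold avgW
      field_simp
    rw [havg, abs_div, abs_of_pos hNpos, div_le_div_iff₀ hNpos hKpos]
    have hb := hSbound N
    have hk2 : ((SCPlay.Kf ℓ N : ℕ) : ℝ) * (SCPlay.Kf ℓ N : ℝ) ≤ 2 * (N : ℝ) := by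
      exact_mod_cast hKN N
    have hk1 : (1 : ℝ) ≤ (SCPlay.Kf ℓ N : ℝ) := by exact_mod_cast hK1
    rw [hEeq]
    nlinarith [abs_nonneg ((∑ i ∈ Finset.range N,
        G.w (SCPlay.glue ℓ g i) (SCPlay.glue ℓ g (i + 1))) - (N : ℝ) * w),
      mul_le_mul_of_nonneg_right hb (le_of_lt hKpos),
      mul_le_mul_of_nonneg_left hk2 hA'0,
      mul_le_mul_of_nonneg_left hk2 hB'0,
      mul_nonneg (mul_nonneg hA'0 (le_of_lt hKpos)) (sub_nonneg.mpr hk1)]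
  have htend : Tendsto (fun N => avgW G (SCPlay.glue ℓ g) N) atTop (nhds w) := by
    rw [tendsto_iff_dist_tendsto_zero]
    simp only [Real.dist_eq]
    refine squeeze_zero' (Filter.Eventually.of_forall fun N => abs_nonneg _) hEv ?_
    exact (tendsto_const_div_atTop_nhds_zero_nat E).comp hKtend
  have hlim : Filter.liminf
      (fun m => ((avgW G (SCPlay.glue ℓ g) m : ℝ) : EReal)) atTop = (w : EReal) :=
    (EReal.tendsto_coe.mpr htend).liminf_eq
  exact ⟨SCPlay.glue ℓ g, hplay, h0, hqInf, hpar, hlim⟩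
end

section
/- Let (a_n) be a sequence produced by concatenating, for i = 1, 2, 3, …, a block of at most B real numbers each with absolute value ≤ W, followed by a block of exactly i numbers taken consecutively from a sequence (b_n) with liminf of Cesàro averages equal to w and |b_n| ≤ W. Then liminf_{n→∞} (1/n) Σ_{k<n} a_k = liminf_{n→∞} (1/n) Σ_{k<n} b_k = w. In other words, interspersing bounded-length bounded-value segments between increasingly long segments of a sequence does not change the liminf of its running averages. -/
open Filter

private def Tq (i : ℕ) : ℕ := ∑ j ∈ Finset.range i, (j + 1)

private lemma Tq_succ (i : ℕ) : Tq (i + 1) = Tq i + (i + 1) := Finset.sum_range_succ _ i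

private lemma Tq_two (i : ℕ) : 2 * Tq i = i * (i + 1) := by
  induction i with
  | zero => simp [Tq]
  | succ n ih => rw [Tq_succ, Nat.mul_add, ih]; ring

private lemma Tq_ge (i : ℕ) : i ≤ Tq i := by
  induction i with
  | zero => simp
  | succ n ih => rw [Tq_succ]; omega

private lemma Tq_strictMono : StrictMono Tq :=
  strictMono_nat_of_lt_succ fun n => by rw [Tq_succ]; omega


/-- interspersing bounded-length (≤ B) segments of numbers of
absolute value ≤ W between increasingly long (length i) consecutive segments of
a sequence b whose running averages have liminf w does not change the liminf of
the running averages: the resulting sequence a also has liminf of averages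
equal to w. -/
theorem liminf_avg_interspersed (W : ℝ) (hW : 0 < W) (B : ℕ)
    (b : ℕ → ℝ) (hb : ∀ n, |b n| ≤ W) (w : ℝ)
    (hlim : Filter.liminf (fun n => (∑ k ∈ Finset.range n, b k) / n) atTop = w)
    (a : ℕ → ℝ) (l : ℕ → ℕ) (hl : ∀ i, l i ≤ B)
    (S : ℕ → ℕ) (hS0 : S 0 = 0) (hS : ∀ i, S (i + 1) = S i + l i + (i + 1))
    (hjunk : ∀ i, ∀ t < l i, |a (S i + t)| ≤ W)
    (hmain : ∀ i, ∀ t < i + 1,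
      a (S i + l i + t) = b ((∑ j ∈ Finset.range i, (j + 1)) + t)) :
    Filter.liminf (fun n => (∑ k ∈ Finset.range n, a k) / n) atTop =
        Filter.liminf (fun n => (∑ k ∈ Finset.range n, b k) / n) atTop ∧
      Filter.liminf (fun n => (∑ k ∈ Finset.range n, a k) / n) atTop = w := by
  classical
  -- basic structural facts
  have hSsum : ∀ i, S i = (∑ j ∈ Finset.range i, l j) + Tq i := by
    intro i
    induction i with
    | zero => simp [hS0, Tq]
    | succ n ih => rw [hS n, ih, Finset.sum_range_succ, Tq_succ]; ring
  have hLB : ∀ i, (∑ j ∈ Finset.range i, l j) ≤ B * i := by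
    intro i
    calc (∑ j ∈ Finset.range i, l j) ≤ ∑ _j ∈ Finset.range i, B :=
          Finset.sum_le_sum fun j _ => hl j
      _ = B * i := by simp [mul_comm]
  have hS_geT : ∀ i, Tq i ≤ S i := fun i => by rw [hSsum i]; omega
  have hS_ge : ∀ i, i ≤ S i := fun i => le_trans (Tq_ge i) (hS_geT i)
  have hSmono : StrictMono S := strictMono_nat_of_lt_succ fun i => by rw [hS]; omega
  -- junk-segment bound
  have hJunk : ∀ i, ∀ t ≤ l i, |∑ k ∈ Finset.range t, a (S i + k)| ≤ W * t := by
    intro i t ht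
    calc |∑ k ∈ Finset.range t, a (S i + k)| ≤ ∑ k ∈ Finset.range t, |a (S i + k)| :=
          Finset.abs_sum_le_sum_abs _ _
      _ ≤ ∑ _k ∈ Finset.range t, W :=
          Finset.sum_le_sum fun k hk => hjunk i k (lt_of_lt_of_le (Finset.mem_range.mp hk) ht)
      _ = W * t := by simp [mul_comm]
  -- boundary comparison
  have key0 : ∀ i, |(∑ k ∈ Finset.range (S i), a k) - ∑ k ∈ Finset.range (Tq i), b k| ≤
      W * (∑ j ∈ Finset.range i, l j) := by
    intro i
    induction i with
    | zero => simp [hS0, Tq]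
    | succ n ih =>
      have hsplit : S (n + 1) = S n + (l n + (n + 1)) := by rw [hS]; ring
      rw [hsplit, Tq_succ, Finset.sum_range_add a (S n) (l n + (n + 1)),
        Finset.sum_range_add (fun k => a (S n + k)) (l n) (n + 1),
        Finset.sum_range_add b (Tq n) (n + 1)]
      have hM : ∀ k ∈ Finset.range (n + 1), a (S n + (l n + k)) = b (Tq n + k) := by
        intro k hk
        have h := hmain n k (Finset.mem_range.mp hk)
        rw [← add_assoc]
        simpa [Tq] using h
      rw [Finset.sum_congr rfl hM]
      have heq : (∑ k ∈ Finset.range (S n), a k) +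
          ((∑ k ∈ Finset.range (l n), a (S n + k)) + ∑ k ∈ Finset.range (n + 1), b (Tq n + k)) -
          ((∑ k ∈ Finset.range (Tq n), b k) + ∑ k ∈ Finset.range (n + 1), b (Tq n + k)) =
          ((∑ k ∈ Finset.range (S n), a k) - ∑ k ∈ Finset.range (Tq n), b k) +
          (∑ k ∈ Finset.range (l n), a (S n + k)) := by ring
      rw [heq]
      calc _ ≤ |(∑ k ∈ Finset.range (S n), a k) - ∑ k ∈ Finset.range (Tq n), b k| +
            |∑ k ∈ Finset.range (l n), a (S n + k)| := abs_add_le _ _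
        _ ≤ W * (∑ j ∈ Finset.range n, l j) + W * l n :=
            add_le_add ih (hJunk n (l n) le_rfl)
        _ = W * ((∑ j ∈ Finset.range n, l j : ℕ) + (l n : ℕ)) := by ring
        _ = W * (∑ j ∈ Finset.range (n + 1), l j) := by
            rw [Finset.sum_range_succ]; push_cast; ring
  -- cast bound for the total junk
  have hcast : ∀ i, W * (∑ j ∈ Finset.range i, l j) + W * l i ≤ W * (B * (i + 1)) := by
    intro i
    have hnat : (∑ j ∈ Finset.range i, l j) + l i ≤ B * (i + 1) := by
      calc (∑ j ∈ Finset.range i, l j) + l i ≤ B * i + B := add_le_add (hLB i) (hl i)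
        _ = B * (i + 1) := by ring
    have : ((∑ j ∈ Finset.range i, l j : ℕ) : ℝ) + (l i : ℕ) ≤ ((B * (i + 1) : ℕ) : ℝ) := by
      exact_mod_cast hnat
    calc W * (∑ j ∈ Finset.range i, l j) + W * l i
        = W * (((∑ j ∈ Finset.range i, l j : ℕ) : ℝ) + (l i : ℕ)) := by ring
      _ ≤ W * ((B * (i + 1) : ℕ) : ℝ) := mul_le_mul_of_nonneg_left this hW.le
      _ = W * (B * (i + 1)) := by push_cast; ring
  -- covering lemma A : inside / end of main segment
  have covA : ∀ i, ∀ t ≤ i + 1,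
      |(∑ k ∈ Finset.range (S i + l i + t), a k) - ∑ k ∈ Finset.range (Tq i + t), b k| ≤
      W * (B * (i + 1)) := by
    intro i t ht
    have hsplit : S i + l i + t = S i + (l i + t) := by ring
    rw [hsplit, Finset.sum_range_add a (S i) (l i + t),
      Finset.sum_range_add (fun k => a (S i + k)) (l i) t,
      Finset.sum_range_add b (Tq i) t]
    have hM : ∀ k ∈ Finset.range t, a (S i + (l i + k)) = b (Tq i + k) := by
      intro k hk
      have h := hmain i k (lt_of_lt_of_le (Finset.mem_range.mp hk) ht)
      rw [← add_assoc]
      simpa [Tq] using h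
    rw [Finset.sum_congr rfl hM]
    have heq : (∑ k ∈ Finset.range (S i), a k) +
        ((∑ k ∈ Finset.range (l i), a (S i + k)) + ∑ k ∈ Finset.range t, b (Tq i + k)) -
        ((∑ k ∈ Finset.range (Tq i), b k) + ∑ k ∈ Finset.range t, b (Tq i + k)) =
        ((∑ k ∈ Finset.range (S i), a k) - ∑ k ∈ Finset.range (Tq i), b k) +
        (∑ k ∈ Finset.range (l i), a (S i + k)) := by ring
    rw [heq]
    calc _ ≤ |(∑ k ∈ Finset.range (S i), a k) - ∑ k ∈ Finset.range (Tq i), b k| +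
          |∑ k ∈ Finset.range (l i), a (S i + k)| := abs_add_le _ _
      _ ≤ W * (∑ j ∈ Finset.range i, l j) + W * l i := add_le_add (key0 i) (hJunk i (l i) le_rfl)
      _ ≤ W * (B * (i + 1)) := hcast i
  -- covering lemma B : inside junk segment
  have covB : ∀ i, ∀ t ≤ l i,
      |(∑ k ∈ Finset.range (S i + t), a k) - ∑ k ∈ Finset.range (Tq i), b k| ≤
      W * (B * (i + 1)) := by
    intro i t ht
    rw [Finset.sum_range_add a (S i) t]
    have heq : (∑ k ∈ Finset.range (S i), a k) + (∑ k ∈ Finset.range t, a (S i + k)) -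
        (∑ k ∈ Finset.range (Tq i), b k) =
        ((∑ k ∈ Finset.range (S i), a k) - ∑ k ∈ Finset.range (Tq i), b k) +
        (∑ k ∈ Finset.range t, a (S i + k)) := by ring
    rw [heq]
    calc _ ≤ |(∑ k ∈ Finset.range (S i), a k) - ∑ k ∈ Finset.range (Tq i), b k| +
          |∑ k ∈ Finset.range t, a (S i + k)| := abs_add_le _ _
      _ ≤ W * (∑ j ∈ Finset.range i, l j) + W * t := add_le_add (key0 i) (hJunk i t ht)
      _ ≤ W * (∑ j ∈ Finset.range i, l j) + W * l i := by
          have : (t : ℝ) ≤ (l i : ℝ) := by exact_mod_cast ht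
          nlinarith
      _ ≤ W * (B * (i + 1)) := hcast i
  -- average comparison
  have avgclose : ∀ i n m : ℕ, 1 ≤ i → Tq i ≤ m → m ≤ n → n ≤ m + B * (i + 1) →
      |(∑ k ∈ Finset.range n, a k) - ∑ k ∈ Finset.range m, b k| ≤ W * (B * (i + 1)) →
      |(∑ k ∈ Finset.range n, a k) / n - (∑ k ∈ Finset.range m, b k) / m| ≤ 4 * W * B / i := by
    intro i n m hi hTm hmn hnm hdiff
    have hm1 : 1 ≤ m := le_trans (le_trans hi (Tq_ge i)) hTm
    have hn1 : 1 ≤ n := le_trans hm1 hmn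
    have hmR : (0 : ℝ) < m := by exact_mod_cast hm1
    have hnR : (0 : ℝ) < n := by exact_mod_cast hn1
    have hmnR : (m : ℝ) ≤ n := by exact_mod_cast hmn
    have hnmR : (n : ℝ) ≤ m + B * (i + 1) := by exact_mod_cast hnm
    have hiR : (0 : ℝ) < i := by exact_mod_cast hi
    have hSB : |∑ k ∈ Finset.range m, b k| ≤ W * m := by
      calc |∑ k ∈ Finset.range m, b k| ≤ ∑ k ∈ Finset.range m, |b k| :=
            Finset.abs_sum_le_sum_abs _ _
        _ ≤ ∑ _k ∈ Finset.range m, W := Finset.sum_le_sum fun k _ => hb k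
        _ = W * m := by simp [mul_comm]
    set SA := ∑ k ∈ Finset.range n, a k with hSAdef
    set SB := ∑ k ∈ Finset.range m, b k with hSBdef
    have h2n : (i : ℝ) * (i + 1) ≤ 2 * n := by
      have h1 : 2 * Tq i = i * (i + 1) := Tq_two i
      have h2 : Tq i ≤ n := le_trans hTm hmn
      have : i * (i + 1) ≤ 2 * n := by omega
      exact_mod_cast this
    have hdecomp : SA / n - SB / m = (SA - SB) / n + SB * (((m : ℝ) - n) / (n * m)) := by
      field_simp
      ring
    rw [hdecomp]
    have hWB : (0 : ℝ) ≤ W * (B * (i + 1)) := by positivity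
    calc |(SA - SB) / n + SB * (((m : ℝ) - n) / (n * m))|
        ≤ |(SA - SB) / n| + |SB * (((m : ℝ) - n) / (n * m))| := abs_add_le _ _
      _ = |SA - SB| / n + |SB| * (((n : ℝ) - m) / (n * m)) := by
          rw [abs_div, abs_mul, abs_div, abs_mul, abs_sub_comm ((m : ℝ)) ((n : ℝ)),
            abs_of_pos hnR, abs_of_pos hmR,
            abs_of_nonneg (by linarith : (0:ℝ) ≤ (n : ℝ) - m)]
      _ ≤ (W * (B * (i + 1))) / n + (W * m) * (((B : ℝ) * (i + 1)) / (n * m)) := by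
          refine add_le_add ((div_le_div_iff_of_pos_right hnR).mpr hdiff) (mul_le_mul hSB ?_ ?_ ?_)
          · apply div_le_div_of_nonneg_right ?_ (by positivity)
            · linarith
          · exact div_nonneg (by linarith) (by positivity)
          · positivity
      _ = 2 * (W * (B * (i + 1))) / n := by
          field_simp
          ring
      _ ≤ 4 * W * B / i := by
          rw [div_le_div_iff₀ hnR hiR]
          have hWB0 : (0 : ℝ) ≤ W * B := by positivity
          nlinarith
  -- every index lies in some block
  have hblock : ∀ n, ∃ i, S i ≤ n ∧ n ≤ S i + l i + i := by
    intro n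
    set P : ℕ → Prop := fun i => S i ≤ n with hP
    have h0 : P 0 := by simp [P, hS0]
    set i := Nat.findGreatest P n with hi
    have hiP : P i := Nat.findGreatest_spec (Nat.zero_le n) h0
    refine ⟨i, hiP, ?_⟩
    by_cases hin : i < n
    · have hnP : ¬ P (i + 1) :=
        Nat.findGreatest_is_greatest (n := n) (by omega) (by omega)
      have := hS i
      simp only [P] at hnP
      omega
    · have : i ≤ n := Nat.findGreatest_le n
      have hin' : i = n := by omega
      omega
  have hblockT : ∀ m, ∃ i, Tq i ≤ m ∧ m ≤ Tq i + i := by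
    intro m
    set P : ℕ → Prop := fun i => Tq i ≤ m with hP
    have h0 : P 0 := by simp [P, Tq]
    set i := Nat.findGreatest P m with hi
    have hiP : P i := Nat.findGreatest_spec (Nat.zero_le m) h0
    refine ⟨i, hiP, ?_⟩
    by_cases him : i < m
    · have hnP : ¬ P (i + 1) :=
        Nat.findGreatest_is_greatest (n := m) (by omega) (by omega)
      have := Tq_succ i
      simp only [P] at hnP
      omega
    · have h1 : i ≤ m := Nat.findGreatest_le m
      have h2 : i ≤ Tq i := Tq_ge i
      omega
  -- boundedness of a
  have habs : ∀ k, |a k| ≤ W := by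
    intro k
    obtain ⟨i, h1, h2⟩ := hblock k
    by_cases hc : k < S i + l i
    · have hk : k = S i + (k - S i) := by omega
      rw [hk]
      exact hjunk i (k - S i) (by omega)
    · have hk : k = S i + l i + (k - (S i + l i)) := by omega
      rw [hk, hmain i (k - (S i + l i)) (by omega)]
      exact hb _
  have havgW : ∀ (u : ℕ → ℝ), (∀ k, |u k| ≤ W) → ∀ n : ℕ,
      |(∑ k ∈ Finset.range n, u k) / n| ≤ W := by
    intro u hu n
    rcases Nat.eq_zero_or_pos n with h | h
    · simp [h, hW.le]
    · have hnR : (0 : ℝ) < n := by exact_mod_cast h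
      rw [abs_div, abs_of_pos hnR, div_le_iff₀ hnR]
      calc |∑ k ∈ Finset.range n, u k| ≤ ∑ k ∈ Finset.range n, |u k| :=
            Finset.abs_sum_le_sum_abs _ _
        _ ≤ ∑ _k ∈ Finset.range n, W := Finset.sum_le_sum fun k _ => hu k
        _ = W * n := by simp [mul_comm]
  have havga := havgW a habs
  have havgb := havgW b hb
  have hbdda_ge : IsBoundedUnder (· ≥ ·) atTop (fun n : ℕ => (∑ k ∈ Finset.range n, a k) / n) :=
    isBoundedUnder_of ⟨-W, fun n => neg_le_of_abs_le (havga n)⟩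
  have hbddb_ge : IsBoundedUnder (· ≥ ·) atTop (fun n : ℕ => (∑ k ∈ Finset.range n, b k) / n) :=
    isBoundedUnder_of ⟨-W, fun n => neg_le_of_abs_le (havgb n)⟩
  have hcobdda : IsCoboundedUnder (· ≥ ·) atTop (fun n : ℕ => (∑ k ∈ Finset.range n, a k) / n) :=
    (isBoundedUnder_of ⟨W, fun n => le_of_abs_le (havga n)⟩ :
      IsBoundedUnder (· ≤ ·) atTop _).isCoboundedUnder_ge
  have hcobddb : IsCoboundedUnder (· ≥ ·) atTop (fun n : ℕ => (∑ k ∈ Finset.range n, b k) / n) :=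
    (isBoundedUnder_of ⟨W, fun n => le_of_abs_le (havgb n)⟩ :
      IsBoundedUnder (· ≤ ·) atTop _).isCoboundedUnder_ge
  -- choose N with 4WB/N ≤ ε/2
  have hNchoice : ∀ ε : ℝ, 0 < ε → ∃ N : ℕ, 1 ≤ N ∧ 4 * W * B / N ≤ ε / 2 := by
    intro ε hε
    refine ⟨max 1 ⌈4 * W * B / (ε / 2)⌉₊, le_max_left _ _, ?_⟩
    set N := max 1 ⌈4 * W * B / (ε / 2)⌉₊ with hN
    have hN1 : 1 ≤ N := le_max_left _ _
    have hNR : (0 : ℝ) < N := by exact_mod_cast hN1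
    have hceil : 4 * W * B / (ε / 2) ≤ (N : ℝ) := by
      calc 4 * W * B / (ε / 2) ≤ (⌈4 * W * B / (ε / 2)⌉₊ : ℝ) := Nat.le_ceil _
        _ ≤ (N : ℝ) := by exact_mod_cast le_max_right _ _
    rw [div_le_iff₀ hNR]
    rw [div_le_iff₀ (by linarith : (0:ℝ) < ε / 2)] at hceil
    linarith
  -- the main claim
  have main : Filter.liminf (fun n : ℕ => (∑ k ∈ Finset.range n, a k) / n) atTop = w := by
    apply le_antisymm
    · -- liminf ≤ w
      apply le_of_forall_pos_le_add
      intro ε hε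
      apply liminf_le_of_frequently_le ?_ hbdda_ge
      obtain ⟨N, hN1, hN⟩ := hNchoice ε hε
      have hfreq := frequently_lt_of_liminf_lt hcobddb
        (show Filter.liminf (fun n : ℕ => (∑ k ∈ Finset.range n, b k) / n) atTop < w + ε / 2 by
          rw [hlim]; linarith)
      rw [frequently_atTop] at hfreq ⊢
      intro M
      obtain ⟨m, hmM, hm⟩ := hfreq (max M (Tq (N + 1)))
      obtain ⟨i, hTi, hTi2⟩ := hblockT m
      have hiN : N ≤ i := by
        have h1 : Tq (N + 1) ≤ m := le_trans (le_max_right _ _) hmM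
        have h2 : m < Tq (i + 1) := by have := Tq_succ i; omega
        have := Tq_strictMono.lt_iff_lt.mp (lt_of_le_of_lt h1 h2)
        omega
      have hi1 : 1 ≤ i := le_trans hN1 hiN
      set t := m - Tq i with ht
      set n := S i + l i + t with hn
      have hmeq : Tq i + t = m := by omega
      have hcov : |(∑ k ∈ Finset.range n, a k) - ∑ k ∈ Finset.range m, b k| ≤
          W * (B * (i + 1)) := by
        have := covA i t (by omega)
        rwa [hmeq] at this
      have hmn : m ≤ n := by
        have := hS_geT i
        omega
      have hnm : n ≤ m + B * (i + 1) := by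
        have h1 := hLB i
        have h2 := hl i
        have h3 := hSsum i
        have h4 : B * i + B = B * (i + 1) := by ring
        omega
      have hclose := avgclose i n m hi1 hTi hmn hnm hcov
      refine ⟨n, ?_, ?_⟩
      · exact le_trans (le_trans (le_max_left _ _) hmM) hmn
      · have h1 := abs_le.mp hclose
        have hdiv : 4 * W * B / i ≤ ε / 2 := by
          refine le_trans ?_ hN
          apply div_le_div_of_nonneg_left (by positivity) (by exact_mod_cast hN1)
          exact_mod_cast hiN
        linarith [h1.1, h1.2, le_of_lt hm]
    · -- w ≤ liminf
      apply le_of_forall_pos_le_add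
      intro ε hε
      have hgoal : w - ε ≤ Filter.liminf (fun n : ℕ => (∑ k ∈ Finset.range n, a k) / n) atTop := by
        apply le_liminf_of_le hcobdda
        obtain ⟨N, hN1, hN⟩ := hNchoice ε hε
        have hev := eventually_lt_of_lt_liminf
          (show w - ε / 2 < Filter.liminf (fun n : ℕ => (∑ k ∈ Finset.range n, b k) / n) atTop by
            rw [hlim]; linarith) hbddb_ge
        rw [eventually_atTop] at hev
        obtain ⟨M, hM⟩ := hev
        rw [eventually_atTop]
        set N' := max N M with hN'
        refine ⟨S (N' + 1), ?_⟩
        intro n hn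
        obtain ⟨i, h1, h2⟩ := hblock n
        have hiN' : N' + 1 ≤ i := by
          have hlt : S (N' + 1) < S (i + 1) := by
            have := hS i
            omega
          have := hSmono.lt_iff_lt.mp hlt
          omega
        have hi1 : 1 ≤ i := by omega
        -- produce m
        obtain ⟨m, hTm, hmn, hnm, hcov⟩ :
            ∃ m, Tq i ≤ m ∧ m ≤ n ∧ n ≤ m + B * (i + 1) ∧
              |(∑ k ∈ Finset.range n, a k) - ∑ k ∈ Finset.range m, b k| ≤ W * (B * (i + 1)) := by
          have h3 := hSsum i
          have h4 := hLB i
          have h5 := hl i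
          have h6 : B * i + B = B * (i + 1) := by ring
          by_cases hc : n ≤ S i + l i
          · refine ⟨Tq i, le_rfl, by omega, by omega, ?_⟩
            have := covB i (n - S i) (by omega)
            have hne : S i + (n - S i) = n := by omega
            rwa [hne] at this
          · refine ⟨Tq i + (n - (S i + l i)), by omega, by omega, by omega, ?_⟩
            have := covA i (n - (S i + l i)) (by omega)
            have hne : S i + l i + (n - (S i + l i)) = n := by omega
            rwa [hne] at this
        have hclose := avgclose i n m hi1 hTm hmn hnm hcov
        have hmM : M ≤ m := by
          have := Tq_ge i
          omega
        have hbm := hM m hmM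
        have h1 := abs_le.mp hclose
        have hdiv : 4 * W * B / i ≤ ε / 2 := by
          refine le_trans ?_ hN
          apply div_le_div_of_nonneg_left (by positivity) (by exact_mod_cast hN1)
          have : N ≤ i := by omega
          exact_mod_cast this
        linarith [h1.1, h1.2]
      linarith
  exact ⟨main.trans hlim.symm, main⟩
end

section
/- Let 𝒢 be a finite mean-payoff parity game whose least priority p is odd, let T = V \ Attr₂(col⁻¹(p)), and let x ∈ ℝ. If some state q of 𝒢 has value ≥ x, then T ≠ ∅ and some state of the restricted game 𝒢↾T has value ≥ x. -/
open Filter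

variable {V : Type}

section AuxAttr

variable {V : Type} (G : Game V) (S : Set V)

/-- Iterative approximation of the Player-2 attractor. -/
def attrN : ℕ → Set V
  | 0 => S
  | n+1 => attrN n ∪ {v | (¬ G.isP1 v ∧ ∃ u, G.E v u ∧ u ∈ attrN n) ∨
      (G.isP1 v ∧ ∀ u, G.E v u → u ∈ attrN n)}

lemma attrN_mono : Monotone (attrN G S) := by
  apply monotone_nat_of_le_succ
  intro n v hv
  exact Or.inl hv

lemma attrN_subset_attr2 (hsucc : ∀ v, ∃ u, G.E v u) :
    ∀ n v, v ∈ attrN G S n → Attr2 G S v := by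
  intro n
  induction n with
  | zero => exact fun v hv => Attr2.base hv
  | succ n ih =>
    intro v hv
    rcases hv with hv | hv
    · exact ih v hv
    · rcases hv with ⟨h1, u, hu, hmem⟩ | ⟨h1, hall⟩
      · exact Attr2.p2 h1 hu (ih u hmem)
      · exact Attr2.p1 h1 (hsucc v) (fun u hu => ih u (hall u hu))

lemma attr2_subset_attrN [Fintype V] {v : V} (hv : Attr2 G S v) : ∃ n, v ∈ attrN G S n := by
  induction hv with
  | base h => exact ⟨0, h⟩
  | p2 h1 h2 _ ih =>
    rcases ih with ⟨n, hn⟩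
    exact ⟨n + 1, Or.inr (Or.inl ⟨h1, _, h2, hn⟩)⟩
  | @p1 v h1 _ hall ih =>
    choose g hg using ih
    classical
    set N := Finset.univ.sup (fun u : V => if h : G.E v u then g u h else 0) with hN
    refine ⟨N + 1, Or.inr (Or.inr ⟨h1, fun u hu => ?_⟩)⟩
    refine attrN_mono G S ?_ (hg u hu)
    calc g u hu = (if h : G.E v u then g u h else 0) := by rw [dif_pos hu]
    _ ≤ N := Finset.le_sup (f := fun u : V => if h : G.E v u then g u h else 0) (Finset.mem_univ u)

/-- Rank of a vertex in the attractor. -/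
noncomputable def attrRank (v : V) : ℕ := sInf {n | v ∈ attrN G S n}

lemma attrRank_mem [Fintype V] {v : V} (hv : Attr2 G S v) : v ∈ attrN G S (attrRank G S v) :=
  Nat.sInf_mem (attr2_subset_attrN G S hv)

lemma attr_step_aux [Fintype V] (hsucc : ∀ v, ∃ u, G.E v u) {c : V}
    (hc : Attr2 G S c) (hcS : c ∉ S) :
    (¬ G.isP1 c → ∃ u, G.E c u ∧ Attr2 G S u ∧ attrRank G S u < attrRank G S c) ∧
    (G.isP1 c → ∀ u, G.E c u → Attr2 G S u ∧ attrRank G S u < attrRank G S c) := by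
  have hmem := attrRank_mem G S hc
  have hrank0 : attrRank G S c ≠ 0 := by
    intro h0
    rw [h0] at hmem
    exact hcS hmem
  obtain ⟨k, hk⟩ := Nat.exists_eq_succ_of_ne_zero hrank0
  have hnot : c ∉ attrN G S k := by
    intro hmemk
    have h2 : attrRank G S c ≤ k := Nat.sInf_le hmemk
    omega
  rw [hk] at hmem
  rcases hmem with hmem | hmem
  · exact absurd hmem hnot
  · have rank_le : ∀ u, u ∈ attrN G S k → Attr2 G S u ∧ attrRank G S u < attrRank G S c := by
      intro u hu
      refine ⟨attrN_subset_attr2 G S hsucc k u hu, ?_⟩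
      have h2 : attrRank G S u ≤ k := Nat.sInf_le hu
      omega
    rcases hmem with ⟨h1, u, hu, humem⟩ | ⟨h1, hall⟩
    · exact ⟨fun _ => ⟨u, hu, rank_le u humem⟩, fun hP1 => absurd hP1 h1⟩
    · exact ⟨fun h => absurd h1 h, fun _ u hu => rank_le u (hall u hu)⟩

lemma p1_escape (hsucc : ∀ v, ∃ u, G.E v u) {v : V} (hv : ¬ Attr2 G S v) (h1 : G.isP1 v) :
    ∃ u, G.E v u ∧ ¬ Attr2 G S u := by
  by_contra h
  push_neg at h
  exact hv (Attr2.p1 h1 (hsucc v) fun u hu => h u hu)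

lemma p2_trap {v : V} (hv : ¬ Attr2 G S v) (h1 : ¬ G.isP1 v) :
    ∀ u, G.E v u → ¬ Attr2 G S u := fun u hu hA => hv (Attr2.p2 h1 hu hA)

end AuxAttr
section AuxBuild

variable {V : Type}

/-- Build a play step by step: state is (history, current). -/
def buildH (next : List V → V → V) (q : V) : ℕ → List V × V
  | 0 => ([], q)
  | n+1 => ((buildH next q n).1 ++ [(buildH next q n).2], next (buildH next q n).1 (buildH next q n).2)

def buildPlay (next : List V → V → V) (q : V) (n : ℕ) : V := (buildH next q n).2

lemma buildH_fst (next : List V → V → V) (q : V) :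
    ∀ n, (buildH next q n).1 = List.ofFn fun i : Fin n => buildPlay next q i := by
  intro n
  induction n with
  | zero => simp [buildH]
  | succ n ih =>
    show (buildH next q n).1 ++ [(buildH next q n).2] = _
    rw [ih, List.ofFn_succ']
    simp [buildPlay, List.concat_eq_append]

lemma buildPlay_zero (next : List V → V → V) (q : V) : buildPlay next q 0 = q := rfl

lemma buildPlay_succ (next : List V → V → V) (q : V) (n : ℕ) :
    buildPlay next q (n+1) = next (List.ofFn fun i : Fin n => buildPlay next q i) (buildPlay next q n) := by
  show (buildH next q (n+1)).2 = _
  rw [show (buildH next q (n+1)).2 = next (buildH next q n).1 (buildH next q n).2 from rfl,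
    buildH_fst]
  rfl

end AuxBuild

section AuxCut

variable {V : Type} (G : Game V) (S : Set V)

open Classical in
/-- Index of the start of the final `T`-block of a history. -/
noncomputable def cutIdx (h : List V) : ℕ :=
  h.length - (h.reverse.takeWhile (fun v => decide (¬ Attr2 G S v))).length

private lemma takeWhile_all {p : V → Bool} : ∀ (l : List V), (∀ x ∈ l, p x = true) →
    l.takeWhile p = l := by
  intro l hl
  induction l with
  | nil => rfl
  | cons a l ih =>
    rw [List.takeWhile_cons_of_pos (hl a (List.mem_cons_self))]
    rw [ih (fun x hx => hl x (List.mem_cons_of_mem a hx))]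

private lemma takeWhile_append_all {p : V → Bool} : ∀ (l₁ l₂ : List V),
    (∀ x ∈ l₁, p x = true) → (l₁ ++ l₂).takeWhile p = l₁ ++ l₂.takeWhile p := by
  intro l₁ l₂ hl
  induction l₁ with
  | nil => rfl
  | cons a l ih =>
    rw [List.cons_append, List.takeWhile_cons_of_pos (hl a (List.mem_cons_self)),
      ih (fun x hx => hl x (List.mem_cons_of_mem a hx)), List.cons_append]

open Classical in
lemma cutIdx_spec (a b : List V) (hb : ∀ v ∈ b, ¬ Attr2 G S v)
    (ha : a = [] ∨ ∃ a' v, a = a' ++ [v] ∧ Attr2 G S v) :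
    cutIdx G S (a ++ b) = a.length := by
  have hbrev : ∀ v ∈ b.reverse, (fun v => decide (¬ Attr2 G S v)) v = true := by
    intro v hv
    simp only [decide_eq_true_eq]
    exact hb v (List.mem_reverse.mp hv)
  rcases ha with rfl | ⟨a', v, rfl, hv⟩
  · simp only [cutIdx, List.nil_append]
    rw [takeWhile_all _ hbrev]
    simp
  · have hrev : (a' ++ [v] ++ b).reverse = b.reverse ++ (v :: a'.reverse) := by simp
    simp only [cutIdx, hrev]
    rw [takeWhile_append_all _ _ hbrev, List.takeWhile_cons_of_neg (by simp [hv])]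
    simp
    omega

end AuxCut
section AuxLiminf

open Filter

lemma ereal_le_of_forall_eps {X Y : EReal} (h : ∀ ε : ℝ, 0 < ε → X ≤ (ε : EReal) + Y) :
    X ≤ Y := by
  induction Y with
  | bot =>
    have := h 1 one_pos
    rwa [EReal.add_bot] at this
  | coe y =>
    induction X with
    | bot => exact bot_le
    | coe x =>
      rw [EReal.coe_le_coe_iff]
      refine le_of_forall_pos_le_add fun ε hε => ?_
      have := h ε hε
      rw [← EReal.coe_add, EReal.coe_le_coe_iff] at this
      linarith
    | top =>
      exfalso
      have := h 1 one_pos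
      rw [← EReal.coe_add] at this
      exact absurd (lt_of_le_of_lt this (EReal.coe_lt_top _)) (lt_irrefl _)
  | top => exact le_top

lemma ereal_liminf_le_of_tendsto_sub {u s : ℕ → ℝ}
    (h : Filter.Tendsto (fun n => u n - s n) atTop (nhds 0)) :
    Filter.liminf (fun n => ((u n : ℝ) : EReal)) atTop ≤
      Filter.liminf (fun n => ((s n : ℝ) : EReal)) atTop := by
  refine ereal_le_of_forall_eps fun ε hε => ?_
  have hev : ∀ᶠ n in atTop, u n - s n < ε := h.eventually_lt_const hε
  have h1 : Filter.liminf (fun n => ((u n : ℝ) : EReal)) atTop ≤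
      Filter.liminf (fun n => ((ε : EReal) + ((s n : ℝ) : EReal))) atTop := by
    refine Filter.liminf_le_liminf (hev.mono fun n hn => ?_)
    rw [show ((ε : EReal) + ((s n : ℝ) : EReal)) = ((ε + s n : ℝ) : EReal) from
      (EReal.coe_add _ _).symm, EReal.coe_le_coe_iff]
    linarith
  refine h1.trans ?_
  have h2 := EReal.liminf_add_le (f := atTop) (u := fun _ : ℕ => (ε : EReal))
      (v := fun n => ((s n : ℝ) : EReal)) ?_ ?_
  · have hc : Filter.limsup (fun _ : ℕ => (ε : EReal)) atTop = (ε : EReal) :=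
      Filter.limsup_const _
    rw [hc] at h2
    exact h2
  · rw [Filter.limsup_const]
    exact Or.inl (EReal.coe_ne_bot ε)
  · rw [Filter.limsup_const]
    exact Or.inl (EReal.coe_ne_top ε)

lemma ereal_liminf_eq_of_tendsto_sub {u s : ℕ → ℝ}
    (h : Filter.Tendsto (fun n => u n - s n) atTop (nhds 0)) :
    Filter.liminf (fun n => ((u n : ℝ) : EReal)) atTop =
      Filter.liminf (fun n => ((s n : ℝ) : EReal)) atTop := by
  refine le_antisymm (ereal_liminf_le_of_tendsto_sub h) (ereal_liminf_le_of_tendsto_sub ?_)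
  have := h.neg
  rw [neg_zero] at this
  convert this using 2 with n
  ring

lemma avg_diff_tendsto (a : ℕ → ℝ) {W : ℝ} (hW : ∀ i, |a i| ≤ W) (N : ℕ) :
    Filter.Tendsto (fun n => (∑ i ∈ Finset.range (n + N), a i) / ((n + N : ℕ) : ℝ) -
      (∑ i ∈ Finset.range n, a (N + i)) / (n : ℝ)) atTop (nhds 0) := by
  have hW0 : 0 ≤ W := le_trans (abs_nonneg _) (hW 0)
  refine squeeze_zero_norm' (a := fun n : ℕ => 2 * (N : ℝ) * W / n) ?_
    (tendsto_const_div_atTop_nhds_zero_nat _)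
  · filter_upwards [eventually_ge_atTop 1] with n hn
    have hn0 : (0 : ℝ) < n := by exact_mod_cast hn
    have hNn0 : (0 : ℝ) < (n : ℝ) + N := by positivity
    set D := ∑ i ∈ Finset.range N, a i with hD
    set S := ∑ i ∈ Finset.range n, a (N + i) with hS
    have hsplit : ∑ i ∈ Finset.range (n + N), a i = D + S := by
      rw [add_comm n N, Finset.sum_range_add]
    have hDb : |D| ≤ N * W := by
      calc |D| ≤ ∑ i ∈ Finset.range N, |a i| := Finset.abs_sum_le_sum_abs _ _
      _ ≤ ∑ _i ∈ Finset.range N, W := Finset.sum_le_sum fun i _ => hW i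
      _ = N * W := by rw [Finset.sum_const, Finset.card_range, nsmul_eq_mul]
    have hSb : |S| ≤ n * W := by
      calc |S| ≤ ∑ i ∈ Finset.range n, |a (N + i)| := Finset.abs_sum_le_sum_abs _ _
      _ ≤ ∑ _i ∈ Finset.range n, W := Finset.sum_le_sum fun i _ => hW _
      _ = n * W := by rw [Finset.sum_const, Finset.card_range, nsmul_eq_mul]
    have hcast : ((n + N : ℕ) : ℝ) = (n : ℝ) + N := by push_cast; ring
    rw [hsplit, hcast]
    have heq : (D + S) / ((n : ℝ) + N) - S / n = ((n : ℝ) * D - N * S) / (n * (n + N)) := by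
      field_simp
      ring
    rw [heq, Real.norm_eq_abs, abs_div]
    have habs : |(n : ℝ) * D - N * S| ≤ 2 * N * W * n := by
      calc |(n : ℝ) * D - N * S| ≤ |(n : ℝ) * D| + |(N : ℝ) * S| := abs_sub _ _
      _ = n * |D| + N * |S| := by
          rw [abs_mul, abs_mul, abs_of_nonneg hn0.le, abs_of_nonneg (by positivity : (0:ℝ) ≤ (N:ℝ))]
      _ ≤ n * (N * W) + N * (n * W) := by
          refine add_le_add (mul_le_mul_of_nonneg_left hDb hn0.le)
            (mul_le_mul_of_nonneg_left hSb (by positivity))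
      _ = 2 * N * W * n := by ring
    have hpos : |(n : ℝ) * ((n : ℝ) + N)| = n * (n + N) := by
      rw [abs_of_nonneg (by positivity)]
    rw [hpos]
    rw [div_le_div_iff₀ (by positivity) hn0]
    calc |(n : ℝ) * D - (N : ℝ) * S| * n ≤ (2 * N * W * n) * n := by
          exact mul_le_mul_of_nonneg_right habs hn0.le
    _ ≤ 2 * N * W * (n * (n + N)) := by
          have hNN : (0:ℝ) ≤ (N:ℝ) := Nat.cast_nonneg N
          nlinarith [mul_nonneg (mul_nonneg (mul_nonneg (by norm_num : (0:ℝ) ≤ 2) hNN) hW0)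
            (mul_nonneg hn0.le hNN)]

end AuxLiminf
section AuxPayoff

open Filter

variable {V : Type}

lemma infOcc_shift (ρ : ℕ → V) (N : ℕ) : InfOcc (fun k => ρ (N + k)) = InfOcc ρ := by
  ext v
  simp only [InfOcc, Set.mem_setOf_eq, Filter.frequently_atTop]
  constructor
  · intro h a
    obtain ⟨b, hb, he⟩ := h a
    exact ⟨N + b, le_trans hb (Nat.le_add_left b N), he⟩
  · intro h a
    obtain ⟨b, hb, he⟩ := h (N + a)
    refine ⟨b - N, by omega, ?_⟩
    have : N + (b - N) = b := by omega
    rw [this]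
    exact he

lemma payoff_shift [Fintype V] (G : Game V) (ρ : ℕ → V) (N : ℕ) :
    payoff G (fun k => ρ (N + k)) = payoff G ρ := by
  have hInf : InfOcc (fun k => ρ (N + k)) = InfOcc ρ := infOcc_shift ρ N
  have hPW : ParityWin G (fun k => ρ (N + k)) ↔ ParityWin G ρ := by
    unfold ParityWin; rw [hInf]
  obtain ⟨W, hWb⟩ : ∃ W, ∀ vu : V × V, |G.w vu.1 vu.2| ≤ W := by
    obtain ⟨W, hW⟩ := (Set.finite_range (fun vu : V × V => |G.w vu.1 vu.2|)).bddAbove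
    exact ⟨W, fun vu => hW (Set.mem_range_self vu)⟩
  have hlim : Filter.liminf (fun n => ((avgW G (fun k => ρ (N + k)) n : ℝ) : EReal)) atTop
      = Filter.liminf (fun n => ((avgW G ρ n : ℝ) : EReal)) atTop := by
    rw [← Filter.liminf_nat_add (fun n => ((avgW G ρ n : ℝ) : EReal)) N]
    refine (ereal_liminf_eq_of_tendsto_sub ?_).symm
    exact avg_diff_tendsto (fun i => G.w (ρ i) (ρ (i + 1)))
      (W := W) (fun i => hWb (ρ i, ρ (i + 1))) N
  by_cases hw : ParityWin G ρ
  · simp only [payoff]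
    rw [if_pos (hPW.mpr hw), if_pos hw, hlim]
  · simp only [payoff]
    rw [if_neg (fun hc => hw (hPW.mp hc)), if_neg hw]

lemma payoff_restrict (G : Game V) (T : Set V) (ρ' : ℕ → T) :
    payoff (G.restrict T) ρ' = payoff G (fun n => (ρ' n).val) := by
  have hcol : (G.restrict T).col '' InfOcc ρ' = G.col '' InfOcc (fun n => (ρ' n).val) := by
    ext c
    constructor
    · rintro ⟨v, hv, rfl⟩
      exact ⟨v.val, hv.mono (fun n hn => by simp only []; rw [hn]), rfl⟩
    · rintro ⟨w, hw, rfl⟩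
      obtain ⟨n₀, hn₀⟩ := hw.exists
      refine ⟨ρ' n₀, ?_, by simp only [] at hn₀; rw [show (G.restrict T).col (ρ' n₀) = G.col (ρ' n₀).val from rfl, hn₀]⟩
      exact hw.mono fun n hn => Subtype.ext (by simp only [] at hn hn₀; rw [hn, hn₀])
  have hPW : ParityWin (G.restrict T) ρ' ↔ ParityWin G (fun n => (ρ' n).val) := by
    unfold ParityWin; rw [hcol]
  by_cases hw : ParityWin (G.restrict T) ρ'
  · simp only [payoff]
    rw [if_pos hw, if_pos (hPW.mp hw)]
    rfl
  · simp only [payoff]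
    rw [if_neg hw, if_neg (fun hc => hw (hPW.mpr hc))]

lemma exists_infOcc_col [Fintype V] (G : Game V) (ρ : ℕ → V) (p : ℕ)
    (h : ∀ n, ∃ m, n ≤ m ∧ G.col (ρ m) = p) : ∃ v, G.col v = p ∧ v ∈ InfOcc ρ := by
  have hI : {n | G.col (ρ n) = p}.Infinite := by
    rw [← Nat.frequently_atTop_iff_infinite]
    rw [Filter.frequently_atTop]
    intro a
    obtain ⟨m, hm, hcm⟩ := h a
    exact ⟨m, hm, hcm⟩
  by_contra hc
  push_neg at hc
  have hfin : ∀ v : V, G.col v = p → {n | ρ n = v}.Finite := by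
    intro v hv
    by_contra hinf
    exact hc v hv (Nat.frequently_atTop_iff_infinite.mpr hinf)
  have : {n | G.col (ρ n) = p} ⊆ ⋃ v ∈ {v : V | G.col v = p}, {n | ρ n = v} := by
    intro n hn
    exact Set.mem_biUnion hn rfl
  exact hI (Set.Finite.subset (Set.Finite.biUnion (Set.toFinite _) fun v hv => hfin v hv) this)

lemma payoff_bot_of_min_odd [Fintype V] (G : Game V) (ρ : ℕ → V) (p : ℕ) (hp : Odd p)
    (hmin : ∀ v, p ≤ G.col v) (h : ∀ n, ∃ m, n ≤ m ∧ G.col (ρ m) = p) :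
    payoff G ρ = ⊥ := by
  obtain ⟨v, hv, hvI⟩ := exists_infOcc_col G ρ p h
  have hne : (G.col '' InfOcc ρ).Nonempty := ⟨p, v, hvI, hv⟩
  have hsinf : sInf (G.col '' InfOcc ρ) = p := by
    refine le_antisymm (Nat.sInf_le ⟨v, hvI, hv⟩) ?_
    obtain ⟨u, _, hu⟩ := Nat.sInf_mem hne
    rw [← hu]
    exact hmin u
  have hnw : ¬ ParityWin G ρ := by
    unfold ParityWin
    rw [hsinf]
    exact (Nat.not_even_iff_odd.mpr hp)
  simp only [payoff]
  rw [if_neg hnw]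

end AuxPayoff
section AuxStrat

variable {V : Type}

lemma ofFn_snoc {α : Type*} (n : ℕ) (g : ℕ → α) :
    List.ofFn (fun i : Fin (n + 1) => g i) = (List.ofFn fun i : Fin n => g i) ++ [g n] := by
  rw [List.ofFn_succ', List.concat_eq_append]
  rfl

open Classical in
noncomputable def restrictStrat (G : Game V) (S : Set V) (hsucc : ∀ v, ∃ u, G.E v u)
    (σ : Strat1 G) (pre : List V) :
    Strat1 (G.restrict {v | ¬ Attr2 G S v}) where
  f h c :=
    if h1 : G.isP1 c.val then
      if h2 : ¬ Attr2 G S (σ.f (pre ++ h.map Subtype.val) c.val) then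
        ⟨σ.f (pre ++ h.map Subtype.val) c.val, h2⟩
      else ⟨(p1_escape G S hsucc c.prop h1).choose,
        (p1_escape G S hsucc c.prop h1).choose_spec.2⟩
    else c
  valid h c h1 := by
    have h1' : G.isP1 c.val := h1
    show G.E c.val _
    rw [dif_pos h1']
    by_cases h2 : ¬ Attr2 G S (σ.f (pre ++ h.map Subtype.val) c.val)
    · rw [dif_pos h2]
      exact σ.valid _ _ h1'
    · rw [dif_neg h2]
      exact (p1_escape G S hsucc c.prop h1').choose_spec.1

end AuxStrat

open Classical in
lemma restrictStrat_f {V : Type} (G : Game V) (S : Set V) (hsucc : ∀ v, ∃ u, G.E v u)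
    (σ : Strat1 G) (pre : List V) (h : List {v | ¬ Attr2 G S v}) (c : {v | ¬ Attr2 G S v}) :
    (restrictStrat G S hsucc σ pre).f h c =
    if h1 : G.isP1 c.val then
      if h2 : ¬ Attr2 G S (σ.f (pre ++ h.map Subtype.val) c.val) then
        ⟨σ.f (pre ++ h.map Subtype.val) c.val, h2⟩
      else ⟨(p1_escape G S hsucc c.prop h1).choose,
        (p1_escape G S hsucc c.prop h1).choose_spec.2⟩
    else c := rfl

/-- Lemma, odd case: least priority p odd,
T = V \ Attr₂(col⁻¹(p)). If some state of 𝒢 has value ≥ x, then T ≠ ∅ and some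
state of 𝒢↾T has value ≥ x. -/
theorem mpp_odd_lemma {V : Type} [Fintype V] (G : Game V)
    (hsucc : ∀ v, ∃ u, G.E v u) (p : ℕ) (hp : Odd p)
    (hmin : ∀ v, p ≤ G.col v) (hex : ∃ v, G.col v = p) (x : ℝ)
    (T : Set V) (hT : T = {v | ¬ Attr2 G {u | G.col u = p} v})
    (hq : ∃ q, (x : EReal) ≤ lowVal G q) :
    T.Nonempty ∧ ∃ q : T, (x : EReal) ≤ lowVal (G.restrict T) q := by
  classical
  subst hT
  set Sset : Set V := {u | G.col u = p} with hSset
  set TT : Set V := {v | ¬ Attr2 G Sset v} with hTT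
  set M : EReal := ⨆ q' : TT, lowVal (G.restrict TT) q' with hM
  have key : ∀ (σ : Strat1 G) (q : V), val1 G σ q ≤ M := by
    intro σ q
    by_contra hlt'
    push_neg at hlt'
    set B := val1 G σ q with hB
    -- chosen T-plays with small payoff
    have hchoice : ∀ (pre : List V) (q' : TT), ∃ f : ℕ → TT,
        (IsPlay (G.restrict TT) f ∧ f 0 = q' ∧
          Consistent1 (G.restrict TT) (restrictStrat G Sset hsucc σ pre) f)
        ∧ payoff (G.restrict TT) f < B := by
      intro pre q'
      have h1 : val1 (G.restrict TT) (restrictStrat G Sset hsucc σ pre) q' ≤ M := by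
        refine le_trans ?_ (le_iSup (fun q'' : TT => lowVal (G.restrict TT) q'') q')
        exact le_iSup (fun σ' => val1 (G.restrict TT) σ' q') _
      have h2 : val1 (G.restrict TT) (restrictStrat G Sset hsucc σ pre) q' < B :=
        lt_of_le_of_lt h1 hlt'
      rw [val1, iInf_lt_iff] at h2
      obtain ⟨⟨f, hf⟩, hfp⟩ := h2
      exact ⟨f, hf, hfp⟩
    choose Ρ hΡ using hchoice
    -- the next-move function
    set next : List V → V → V := fun h c =>
      if h1 : G.isP1 c then σ.f h c
      else if hA : Attr2 G Sset c then
        if hScol : G.col c = p then (hsucc c).choose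
        else ((attr_step_aux G Sset hsucc hA hScol).1 h1).choose
      else
        if hq' : ¬ Attr2 G Sset (h.getD (cutIdx G Sset h) c) then
          if hmatch : c = (Ρ (h.take (cutIdx G Sset h)) ⟨_, hq'⟩
              (h.length - cutIdx G Sset h)).val then
            (Ρ (h.take (cutIdx G Sset h)) ⟨_, hq'⟩ (h.length - cutIdx G Sset h + 1)).val
          else (hsucc c).choose
        else (hsucc c).choose
      with hnext
    set ρ : ℕ → V := buildPlay next q with hρ
    have hstep : ∀ n, ρ (n+1) = next (List.ofFn fun i : Fin n => ρ i) (ρ n) := by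
      intro n
      rw [hρ]
      exact buildPlay_succ next q n
    have hedge : ∀ h c, G.E c (next h c) := by
      intro h c
      rw [hnext]
      dsimp only
      by_cases h1 : G.isP1 c
      · rw [dif_pos h1]
        exact σ.valid h c h1
      · rw [dif_neg h1]
        by_cases hA : Attr2 G Sset c
        · rw [dif_pos hA]
          by_cases hScol : G.col c = p
          · rw [dif_pos hScol]
            exact (hsucc c).choose_spec
          · rw [dif_neg hScol]
            exact ((attr_step_aux G Sset hsucc hA hScol).1 h1).choose_spec.1
        · rw [dif_neg hA]
          by_cases hq' : ¬ Attr2 G Sset (h.getD (cutIdx G Sset h) c)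
          · rw [dif_pos hq']
            by_cases hmatch : c = (Ρ (h.take (cutIdx G Sset h)) ⟨_, hq'⟩
                (h.length - cutIdx G Sset h)).val
            · rw [dif_pos hmatch]
              have hplayTT : G.E (Ρ (h.take (cutIdx G Sset h)) ⟨_, hq'⟩
                    (h.length - cutIdx G Sset h)).val
                  (Ρ (h.take (cutIdx G Sset h)) ⟨_, hq'⟩
                    (h.length - cutIdx G Sset h + 1)).val :=
                (hΡ (h.take (cutIdx G Sset h)) ⟨_, hq'⟩).1.1 (h.length - cutIdx G Sset h)
              rw [← hmatch] at hplayTT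
              exact hplayTT
            · rw [dif_neg hmatch]
              exact (hsucc c).choose_spec
          · rw [dif_neg hq']
            exact (hsucc c).choose_spec
    have hplay : IsPlay G ρ := by
      intro n
      rw [hstep n]
      exact hedge _ _
    have hcons : Consistent1 G σ ρ := by
      intro n h1
      rw [hstep n, hnext]
      dsimp only
      rw [dif_pos h1]
    have hBpay : B ≤ payoff G ρ := by
      rw [hB, val1]
      exact iInf_le (fun ρ' : {ρ' : ℕ → V // IsPlay G ρ' ∧ ρ' 0 = q ∧ Consistent1 G σ ρ'} =>
        payoff G ρ'.val) ⟨ρ, hplay, by rw [hρ]; rfl, hcons⟩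
    by_cases hcase : {n | Attr2 G Sset (ρ n)}.Infinite
    · -- Player 2 forces priority p infinitely often
      have hreach : ∀ r n, Attr2 G Sset (ρ n) → attrRank G Sset (ρ n) ≤ r →
          ∃ m, n ≤ m ∧ G.col (ρ m) = p := by
        intro r
        induction r with
        | zero =>
          intro n hA hr
          have h0 : attrRank G Sset (ρ n) = 0 := le_antisymm hr (Nat.zero_le _)
          have hmem := attrRank_mem G Sset hA
          rw [h0] at hmem
          exact ⟨n, le_rfl, hmem⟩
        | succ r ih =>
          intro n hA hr
          by_cases hScol : G.col (ρ n) = p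
          · exact ⟨n, le_rfl, hScol⟩
          · have hstep' : Attr2 G Sset (ρ (n+1)) ∧
                attrRank G Sset (ρ (n+1)) < attrRank G Sset (ρ n) := by
              by_cases h1 : G.isP1 (ρ n)
              · exact (attr_step_aux G Sset hsucc hA hScol).2 h1 (ρ (n+1)) (hplay n)
              · have hval : ρ (n+1) = ((attr_step_aux G Sset hsucc hA hScol).1 h1).choose := by
                  rw [hstep n, hnext]
                  dsimp only
                  rw [dif_neg h1, dif_pos hA, dif_neg hScol]
                rw [hval]
                obtain ⟨hE, hA2, hrk⟩ :=
                  ((attr_step_aux G Sset hsucc hA hScol).1 h1).choose_spec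
                exact ⟨hA2, hrk⟩
            obtain ⟨m, hm, hcm⟩ := ih (n+1) hstep'.1 (by omega)
            exact ⟨m, by omega, hcm⟩
      have hforall : ∀ n, ∃ m, n ≤ m ∧ G.col (ρ m) = p := by
        intro n
        obtain ⟨b, hb, hnb⟩ := hcase.exists_gt n
        obtain ⟨m, hm, hcm⟩ := hreach (attrRank G Sset (ρ b)) b hb le_rfl
        exact ⟨m, by omega, hcm⟩
      have hbot := payoff_bot_of_min_odd G ρ p hp hmin hforall
      rw [hbot] at hBpay
      exact absurd hlt' (not_lt.mpr (le_trans hBpay bot_le))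
    · -- the play eventually stays in TT
      rw [Set.not_infinite] at hcase
      have hNex : ∃ N, ∀ m, N ≤ m → ¬ Attr2 G Sset (ρ m) := by
        obtain ⟨b, hb⟩ := hcase.bddAbove
        refine ⟨b + 1, fun m hm hA => ?_⟩
        have := hb hA
        omega
      obtain ⟨N, hNall, hNprev⟩ : ∃ N, (∀ m, N ≤ m → ¬ Attr2 G Sset (ρ m)) ∧
          (N = 0 ∨ (N ≠ 0 ∧ Attr2 G Sset (ρ (N - 1)))) := by
        refine ⟨Nat.find hNex, Nat.find_spec hNex, ?_⟩
        by_cases h0 : Nat.find hNex = 0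
        · exact Or.inl h0
        · refine Or.inr ⟨h0, ?_⟩
          have hmin' := Nat.find_min hNex (m := Nat.find hNex - 1) (by omega)
          push_neg at hmin'
          obtain ⟨m, hm, hA⟩ := hmin'
          have hmN : m = Nat.find hNex - 1 := by
            by_contra hne
            exact Nat.find_spec hNex m (by omega) hA
          rwa [hmN] at hA
      set pre := List.ofFn (fun i : Fin N => ρ i) with hpre
      have hq'T : ρ N ∈ TT := hNall N le_rfl
      set q0 : TT := ⟨ρ N, hq'T⟩ with hq0
      obtain ⟨⟨hfplay, hf0, hfcons⟩, hfpay⟩ := hΡ pre q0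
      set f := Ρ pre q0 with hfdef
      have hkey : ∀ k, ρ (N + k) = (f k).val := by
        intro k
        induction k using Nat.strong_induction_on with
        | _ k ih =>
          match k with
          | 0 =>
            show ρ (N + 0) = (f 0).val
            rw [hf0]
            rfl
          | k + 1 =>
            have ihk : ρ (N + k) = (f k).val := ih k (by omega)
            have hhist : (List.ofFn fun i : Fin (N+k) => ρ i) =
                pre ++ List.map Subtype.val (List.ofFn fun i : Fin k => f i) := by
              rw [List.ofFn_add, List.map_ofFn]
              congr 1
              exact congrArg List.ofFn (funext fun j =>
                ih j.val (Nat.lt_succ_of_lt j.isLt))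
            have hstepv : ρ (N + (k+1)) = next (List.ofFn fun i : Fin (N+k) => ρ i) (ρ (N+k)) :=
              hstep (N+k)
            by_cases h1 : G.isP1 (ρ (N+k))
            · -- Player 1 move: σ stays in TT here
              have hval : ρ (N + (k+1)) = σ.f (List.ofFn fun i : Fin (N+k) => ρ i) (ρ (N+k)) := by
                rw [hstepv, hnext]
                dsimp only
                rw [dif_pos h1]
              have hT1 : ¬ Attr2 G Sset (σ.f (List.ofFn fun i : Fin (N+k) => ρ i) (ρ (N+k))) := by
                rw [← hval]
                exact hNall (N + (k+1)) (by omega)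
              have hp1' : G.isP1 (f k).val := by rw [← ihk]; exact h1
              have hconsk := hfcons k hp1'
              have hargeq : σ.f (pre ++ (List.ofFn fun i : Fin k => f i).map Subtype.val)
                  (f k).val = σ.f (List.ofFn fun i : Fin (N+k) => ρ i) (ρ (N+k)) := by
                rw [← hhist, ← ihk]
              rw [hval, hconsk, restrictStrat_f]
              rw [dif_pos hp1']
              rw [dif_pos (show ¬ Attr2 G Sset (σ.f (pre ++
                (List.ofFn fun i : Fin k => f i).map Subtype.val) (f k).val) from by
                  rw [hargeq]; exact hT1)]
              exact hargeq.symm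
            · -- Player 2 move: follows the chosen T-play
              have hAc : ¬ Attr2 G Sset (ρ (N+k)) := hNall (N+k) (by omega)
              have hcut : cutIdx G Sset (List.ofFn fun i : Fin (N+k) => ρ i) = N := by
                rw [hhist]
                have hb : ∀ v ∈ List.map Subtype.val (List.ofFn fun i : Fin k => f i),
                    ¬ Attr2 G Sset v := by
                  rintro v hv
                  obtain ⟨w, hw, rfl⟩ := List.mem_map.mp hv
                  exact w.prop
                have ha : pre = [] ∨ ∃ a' v, pre = a' ++ [v] ∧ Attr2 G Sset v := by
                  rcases hNprev with h0 | ⟨h0, hA2⟩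
                  · left
                    rw [hpre, h0]
                    rfl
                  · right
                    obtain ⟨N', hN'⟩ : ∃ N', N = N' + 1 := ⟨N - 1, by omega⟩
                    refine ⟨List.ofFn (fun i : Fin N' => ρ i), ρ N', ?_, ?_⟩
                    · rw [hpre, hN']
                      exact ofFn_snoc N' ρ
                    · have : N - 1 = N' := by omega
                      rwa [this] at hA2
                rw [cutIdx_spec G Sset pre _ hb ha, hpre, List.length_ofFn]
              have hlen : (List.ofFn fun i : Fin (N+k) => ρ i).length = N + k :=
                List.length_ofFn
              have hget : (List.ofFn fun i : Fin (N+k) => ρ i).getD N (ρ (N+k)) = ρ N := by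
                rw [hhist]
                rcases Nat.eq_zero_or_pos k with hk0 | hkpos
                · subst hk0
                  rw [List.getD_eq_default _ _ (by simp [hpre])]
                  rfl
                · rw [List.getD_append_right _ _ _ _
                    (le_of_eq (by rw [hpre, List.length_ofFn]))]
                  rw [hpre, List.length_ofFn, Nat.sub_self]
                  rw [List.getD_eq_getElem _ _ (by simpa using hkpos)]
                  simp only [List.getElem_map, List.getElem_ofFn]
                  show (f 0).val = ρ N
                  rw [hf0]
              have htake : (List.ofFn fun i : Fin (N+k) => ρ i).take N = pre := by
                rw [hhist, show N = pre.length from by rw [hpre, List.length_ofFn],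
                  List.take_left]
              rw [hstepv, hnext]
              dsimp only
              rw [dif_neg h1, dif_neg hAc]
              simp only [hcut, hlen, htake, hget]
              rw [dif_pos (show ¬ Attr2 G Sset (ρ N) from hq'T)]
              have harith : N + k - N = k := by omega
              simp only [harith]
              rw [dif_pos (show ρ (N+k) = ((Ρ pre ⟨ρ N, hq'T⟩) k).val from ihk)]
      have hshift : (fun k => ρ (N + k)) = fun k => (f k).val := funext hkey
      have hpeq : payoff G ρ = payoff (G.restrict TT) f := by
        rw [← payoff_shift G ρ N, hshift, ← payoff_restrict]
      rw [hpeq] at hBpay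
      exact absurd (lt_of_le_of_lt hBpay hfpay) (lt_irrefl _)
  obtain ⟨q, hq⟩ := hq
  have hxM : (x : EReal) ≤ M := by
    refine le_trans hq ?_
    rw [lowVal]
    exact iSup_le fun σ => key σ q
  have hTne : TT.Nonempty := by
    by_contra hemp
    rw [Set.not_nonempty_iff_eq_empty] at hemp
    have hempty : IsEmpty TT := by
      rw [hemp]
      exact Set.isEmpty_coe_sort.mpr rfl
    rw [hM, iSup_of_empty] at hxM
    exact EReal.coe_ne_bot x (le_bot_iff.mp hxM)
  have hne : Nonempty TT := hTne.to_subtype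
  obtain ⟨q', hq'max⟩ := Finite.exists_max (fun q' : TT => lowVal (G.restrict TT) q')
  refine ⟨hTne, q', le_trans hxM ?_⟩
  rw [hM]
  exact iSup_le fun i => hq'max i
end
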